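/- arXiv:2108.04399 — 3 statements merged into one kernel-verified Lean document; each statement's English description precedes it below -/
import Mathlib

section
/- Let G be an HZ-graph with maximum degree Δ ≥ 4 such that N_{Δ−1}(u) = N_{Δ−1}(v) for every pair of degree-Δ vertices u, v. Then the bipartite subgraph of G between V_Δ and V_{Δ−1} is complete bipartite, i.e., every degree-Δ vertex is adjacent to every degree-(Δ−1) vertex. -/
open SimpleGraph

/-- A proper edge `k`-coloring of `G` with colors in `[1, k]`. -/
def IsProperEdgeColoring {V : Type*} (G : SimpleGraph V) (k : ℕ) (c : Sym2 V → ℕ) : Prop :=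
  (∀ e ∈ G.edgeSet, c e ∈ Finset.Icc 1 k) ∧
  ∀ e ∈ G.edgeSet, ∀ f ∈ G.edgeSet, e ≠ f → (∃ v : V, v ∈ e ∧ v ∈ f) → c e ≠ c f

/-- `G` has a proper edge coloring with `k` colors. -/
def EdgeColorable {V : Type*} (G : SimpleGraph V) (k : ℕ) : Prop :=
  ∃ c : Sym2 V → ℕ, IsProperEdgeColoring G k c

/-- The set of colors of `[1, k]` missing at `v`. -/
def missingColors {V : Type*} (G : SimpleGraph V) (k : ℕ) (c : Sym2 V → ℕ) (v : V) : Set ℕ :=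
  {α | α ∈ Finset.Icc 1 k ∧ ¬ ∃ e ∈ G.edgeSet, v ∈ e ∧ c e = α}

/-- The subgraph of `G` consisting of the edges colored `α` or `β`;
its components are the `(α, β)`-chains. -/
def chainGraph {V : Type*} (G : SimpleGraph V) (c : Sym2 V → ℕ) (α β : ℕ) : SimpleGraph V :=
  SimpleGraph.fromEdgeSet {e ∈ G.edgeSet | c e = α ∨ c e = β}

-- Let `G` be an HZ-graph with maximum degree `Δ ≥ 4` such that all degree-`Δ` vertices
-- have the same set of degree-`(Δ−1)` neighbors.  Then every degree-`Δ` vertex is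
-- adjacent to every degree-`(Δ−1)` vertex (the bipartite subgraph between `V_Δ` and
-- `V_{Δ−1}` is complete bipartite).
set_option linter.unusedSectionVars false

attribute [-instance] SimpleGraph.instDecidableRelAdjDeleteEdgesOfDecidablePredSym2MemSetOfDecidableEq

namespace HZ

open Classical

variable {V : Type*}

lemma mem_edge_exists {G : SimpleGraph V} {e : Sym2 V} {v : V} (he : e ∈ G.edgeSet)
    (hv : v ∈ e) : ∃ w, G.Adj v w ∧ e = s(v, w) := by
  induction e with
  | _ a b =>
    rw [Sym2.mem_iff] at hv
    rcases hv with rfl | rfl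
    · exact ⟨b, he, rfl⟩
    · exact ⟨a, (G.mem_edgeSet.mp he).symm, Sym2.eq_swap⟩

lemma missing_iff {G : SimpleGraph V} {k : ℕ} {c : Sym2 V → ℕ} {v : V} {α : ℕ} :
    α ∈ missingColors G k c v ↔
      α ∈ Finset.Icc 1 k ∧ ∀ w, G.Adj v w → c s(v, w) ≠ α := by
  constructor
  · rintro ⟨h1, h2⟩
    refine ⟨h1, fun w hw hc => h2 ⟨s(v, w), hw, Sym2.mem_mk_left _ _, hc⟩⟩
  · rintro ⟨h1, h2⟩
    refine ⟨h1, ?_⟩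
    rintro ⟨e, he, hve, hce⟩
    obtain ⟨w, hw, rfl⟩ := mem_edge_exists he hve
    exact h2 w hw hce

lemma proper_mono {G₁ G₂ : SimpleGraph V} {k : ℕ} {c : Sym2 V → ℕ} (h : G₁ ≤ G₂)
    (hc : IsProperEdgeColoring G₂ k c) : IsProperEdgeColoring G₁ k c := by
  have hs : G₁.edgeSet ⊆ G₂.edgeSet := SimpleGraph.edgeSet_mono h
  exact ⟨fun e he => hc.1 e (hs he),
    fun e he f hf hef hshare => hc.2 e (hs he) f (hs hf) hef hshare⟩

lemma missing_anti {G₁ G₂ : SimpleGraph V} {k : ℕ} {c : Sym2 V → ℕ} (h : G₁ ≤ G₂) (v : V) :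
    missingColors G₂ k c v ⊆ missingColors G₁ k c v := by
  rintro α ⟨h1, h2⟩
  exact ⟨h1, fun ⟨e, he, hv, hc⟩ => h2 ⟨e, SimpleGraph.edgeSet_mono h he, hv, hc⟩⟩

/-- The missing colors as a `Finset`. -/
noncomputable def missF (G : SimpleGraph V) (k : ℕ) (c : Sym2 V → ℕ) (v : V) : Finset ℕ :=
  (Finset.Icc 1 k).filter (fun α => α ∈ missingColors G k c v)

lemma mem_missF {G : SimpleGraph V} {k : ℕ} {c : Sym2 V → ℕ} {v : V} {α : ℕ} :
    α ∈ missF G k c v ↔ α ∈ missingColors G k c v := by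
  unfold missF
  constructor
  · exact fun h => (Finset.mem_filter.mp h).2
  · exact fun h => Finset.mem_filter.mpr ⟨h.1, h⟩

open Classical in
lemma missF_card [Fintype V] (G : SimpleGraph V) (k : ℕ) (c : Sym2 V → ℕ) (v : V) :
    k ≤ G.degree v + (missF G k c v).card := by
  classical
  set used : Finset ℕ := (G.neighborFinset v).image (fun w => c s(v, w)) with hused
  have hsub : Finset.Icc 1 k ⊆ missF G k c v ∪ used := by
    intro α hα
    by_cases hm : α ∈ missingColors G k c v
    · exact Finset.mem_union_left _ (mem_missF.mpr hm)
    · refine Finset.mem_union_right _ ?_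
      unfold missingColors at hm
      simp only [Set.mem_setOf_eq, not_and, not_not] at hm
      obtain ⟨e, he, hve, hce⟩ := hm hα
      obtain ⟨w, hw, rfl⟩ := mem_edge_exists he hve
      exact Finset.mem_image.mpr ⟨w, G.mem_neighborFinset v w |>.mpr hw, hce⟩
  have hk : (Finset.Icc 1 k).card = k := by rw [Nat.card_Icc]; omega
  calc k = (Finset.Icc 1 k).card := hk.symm
    _ ≤ (missF G k c v ∪ used).card := Finset.card_le_card hsub
    _ ≤ (missF G k c v).card + used.card := Finset.card_union_le _ _
    _ ≤ (missF G k c v).card + G.degree v := by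
        have h1 : used.card ≤ G.degree v := by
          rw [hused, SimpleGraph.degree]
          exact Finset.card_image_le
        omega
    _ = G.degree v + (missF G k c v).card := Nat.add_comm _ _

open Classical in
lemma missing_nonempty [Fintype V] {G : SimpleGraph V} {k : ℕ} {c : Sym2 V → ℕ} {v : V}
    (h : G.degree v < k) : ∃ α, α ∈ missingColors G k c v := by
  have := missF_card G k c v
  have hcard : 0 < (missF G k c v).card := by omega
  obtain ⟨α, hα⟩ := Finset.card_pos.mp hcard
  exact ⟨α, mem_missF.mp hα⟩

/-- Recolor one edge. -/
noncomputable def recolor (c : Sym2 V → ℕ) (e₀ : Sym2 V) (δ : ℕ) : Sym2 V → ℕ :=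
  fun e => if e = e₀ then δ else c e

lemma recolor_apply_ne {c : Sym2 V → ℕ} {e₀ e : Sym2 V} {δ : ℕ} (h : e ≠ e₀) :
    recolor c e₀ δ e = c e := if_neg h

lemma recolor_apply {c : Sym2 V → ℕ} {e₀ : Sym2 V} {δ : ℕ} :
    recolor c e₀ δ e₀ = δ := if_pos rfl

/-- Recoloring an edge with a color missing at both of its ends preserves properness. -/
lemma recolor_proper {G₂ : SimpleGraph V} {k : ℕ} {c : Sym2 V → ℕ} {a b : V} {δ : ℕ}
    (hab : G₂.Adj a b)
    (hc : IsProperEdgeColoring (G₂.deleteEdges {s(a, b)}) k c)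
    (hδa : δ ∈ missingColors (G₂.deleteEdges {s(a, b)}) k c a)
    (hδb : δ ∈ missingColors (G₂.deleteEdges {s(a, b)}) k c b) :
    IsProperEdgeColoring G₂ k (recolor c s(a, b) δ) := by
  set G' := G₂.deleteEdges {s(a, b)} with hG'
  have hedge : G'.edgeSet = G₂.edgeSet \ {s(a, b)} := SimpleGraph.edgeSet_deleteEdges _
  have hmem : ∀ e ∈ G₂.edgeSet, e ≠ s(a, b) → e ∈ G'.edgeSet := by
    intro e he hne
    rw [hedge]; exact ⟨he, hne⟩
  constructor
  · intro e he
    by_cases h : e = s(a, b)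
    · rw [h, recolor_apply]; exact hδa.1
    · rw [recolor_apply_ne h]; exact hc.1 e (hmem e he h)
  · intro e he f hf hef hshare
    obtain ⟨v, hve, hvf⟩ := hshare
    by_cases h1 : e = s(a, b)
    · subst h1
      have hf' : f ∈ G'.edgeSet := hmem f hf (fun h => hef h.symm)
      rw [recolor_apply, recolor_apply_ne (fun h => hef h.symm)]
      intro hcontra
      have hv : v = a ∨ v = b := Sym2.mem_iff.mp hve
      rcases hv with rfl | rfl
      · exact hδa.2 ⟨f, hf', hvf, hcontra.symm⟩
      · exact hδb.2 ⟨f, hf', hvf, hcontra.symm⟩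
    · by_cases h2 : f = s(a, b)
      · subst h2
        have he' : e ∈ G'.edgeSet := hmem e he h1
        rw [recolor_apply, recolor_apply_ne h1]
        intro hcontra
        have hv : v = a ∨ v = b := Sym2.mem_iff.mp hvf
        rcases hv with rfl | rfl
        · exact hδa.2 ⟨e, he', hve, hcontra⟩
        · exact hδb.2 ⟨e, he', hve, hcontra⟩
      · rw [recolor_apply_ne h1, recolor_apply_ne h2]
        exact hc.2 e (hmem e he h1) f (hmem f hf h2) hef ⟨v, hve, hvf⟩

/-- Recoloring an edge does not change missing colors at vertices not on the edge. -/
lemma missing_recolor_not_mem {G : SimpleGraph V} {k : ℕ} {c : Sym2 V → ℕ} {e₀ : Sym2 V}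
    {δ : ℕ} {v : V} (hv : v ∉ e₀) :
    missingColors G k (recolor c e₀ δ) v = missingColors G k c v := by
  unfold missingColors
  ext α
  simp only [Set.mem_setOf_eq]
  constructor
  · rintro ⟨h1, h2⟩
    refine ⟨h1, fun ⟨e, he, hve, hce⟩ => h2 ⟨e, he, hve, ?_⟩⟩
    rw [recolor_apply_ne (fun h : e = e₀ => hv (h ▸ hve))]; exact hce
  · rintro ⟨h1, h2⟩
    refine ⟨h1, fun ⟨e, he, hve, hce⟩ => h2 ⟨e, he, hve, ?_⟩⟩
    rw [recolor_apply_ne (fun h : e = e₀ => hv (h ▸ hve))] at hce; exact hce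

/-- After recoloring the edge `s(x,z)` to a new color, its old color is missing at `x`
(provided it differs from the new color). -/
lemma missing_recolor_freed {G' : SimpleGraph V} {k : ℕ} {c : Sym2 V → ℕ} {x z : V} {δ : ℕ}
    (hprop : IsProperEdgeColoring G' k c) (hxz : s(x, z) ∈ G'.edgeSet)
    (hne : c s(x, z) ≠ δ) {v : V} (hv : v ∈ s(x, z)) :
    c s(x, z) ∈ missingColors G' k (recolor c s(x, z) δ) v := by
  refine ⟨hprop.1 _ hxz, ?_⟩
  rintro ⟨e, he, hve, hce⟩
  by_cases h : e = s(x, z)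
  · rw [h, recolor_apply] at hce; exact hne hce.symm
  · rw [recolor_apply_ne h] at hce
    exact hprop.2 e he s(x, z) hxz h ⟨v, hve, hv⟩ hce

section Chain

variable {G : SimpleGraph V} {φ : Sym2 V → ℕ} {δ μ : ℕ} {k : ℕ}

lemma chain_adj {a b : V} :
    (chainGraph G φ δ μ).Adj a b ↔
      (s(a, b) ∈ G.edgeSet ∧ (φ s(a, b) = δ ∨ φ s(a, b) = μ)) ∧ a ≠ b := by
  unfold chainGraph
  rw [SimpleGraph.fromEdgeSet_adj]
  exact Iff.rfl

lemma chain_le : chainGraph G φ δ μ ≤ G := by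
  intro a b hab
  rw [chain_adj] at hab
  exact hab.1.1

lemma chain_reach_of_mem {e : Sym2 V} (he : e ∈ G.edgeSet) (hcol : φ e = δ ∨ φ e = μ)
    {v w : V} (hv : v ∈ e) (hw : w ∈ e) : (chainGraph G φ δ μ).Reachable v w := by
  obtain ⟨z, hz, rfl⟩ := mem_edge_exists he hv
  rw [Sym2.mem_iff] at hw
  rcases hw with rfl | rfl
  · exact SimpleGraph.Reachable.refl _
  · exact (SimpleGraph.Adj.reachable (chain_adj.mpr ⟨⟨he, hcol⟩, hz.ne⟩))

open Classical in
lemma chain_neighbor_color {v w : V} (h : (chainGraph G φ δ μ).Adj v w) :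
    φ s(v, w) = δ ∨ φ s(v, w) = μ := (chain_adj.mp h).1.2

open Classical in
lemma chain_card_le [Fintype V] (hprop : IsProperEdgeColoring G k φ) (v : V)
    (t : Finset ℕ) (ht : ∀ w, (chainGraph G φ δ μ).Adj v w → φ s(v, w) ∈ t) :
    (chainGraph G φ δ μ).degree v ≤ t.card := by
  classical
  rw [SimpleGraph.degree]
  have hinj : Set.InjOn (fun w => φ s(v, w)) ((chainGraph G φ δ μ).neighborFinset v) := by
    intro w1 h1 w2 h2 heq
    rw [Finset.mem_coe, SimpleGraph.mem_neighborFinset] at h1 h2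
    have h1' := h1
    have h2' := h2
    simp only at heq
    by_contra hne
    have hedne : s(v, w1) ≠ s(v, w2) := by
      intro hcontra
      rw [Sym2.eq_iff] at hcontra
      rcases hcontra with ⟨_, h⟩ | ⟨ha, hb⟩
      · exact hne h
      · exact hne (hb.trans ha)
    exact hprop.2 _ (G.mem_edgeSet.mpr (chain_le h1')) _ (G.mem_edgeSet.mpr (chain_le h2')) hedne
      ⟨v, Sym2.mem_mk_left _ _, Sym2.mem_mk_left _ _⟩ heq
  calc ((chainGraph G φ δ μ).neighborFinset v).card
      = (((chainGraph G φ δ μ).neighborFinset v).image (fun w => φ s(v, w))).card :=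
        (Finset.card_image_of_injOn hinj).symm
    _ ≤ t.card := by
        apply Finset.card_le_card
        intro α hα
        obtain ⟨w, hw, rfl⟩ := Finset.mem_image.mp hα
        exact ht w (SimpleGraph.mem_neighborFinset _ _ _ |>.mp hw)

open Classical in
lemma chain_deg_le_two [Fintype V] (hprop : IsProperEdgeColoring G k φ) (v : V) :
    (chainGraph G φ δ μ).degree v ≤ 2 := by
  classical
  have := chain_card_le (δ := δ) (μ := μ) hprop v {δ, μ}
    (fun w hw => by rcases chain_neighbor_color hw with h | h <;> simp [h])
  exact this.trans (Finset.card_insert_le _ _ |>.trans (by simp))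

open Classical in
lemma chain_deg_le_one [Fintype V] (hprop : IsProperEdgeColoring G k φ) {v : V}
    (hmiss : δ ∈ missingColors G k φ v ∨ μ ∈ missingColors G k φ v) :
    (chainGraph G φ δ μ).degree v ≤ 1 := by
  classical
  rcases hmiss with hm | hm
  · have := chain_card_le (δ := δ) (μ := μ) hprop v {μ} ?_
    · exact this.trans (by simp)
    · intro w hw
      rcases chain_neighbor_color hw with h | h
      · exact absurd h ((missing_iff.mp hm).2 w (chain_le ((chain_adj.mp hw))))
      · simp [h]
  · have := chain_card_le (δ := δ) (μ := μ) hprop v {δ} ?_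
    · exact this.trans (by simp)
    · intro w hw
      rcases chain_neighbor_color hw with h | h
      · simp [h]
      · exact absurd h ((missing_iff.mp hm).2 w (chain_le ((chain_adj.mp hw))))

end Chain

/-- The condition for an edge to be swapped: it is a chain edge in the component of `u`. -/
def InChain (G : SimpleGraph V) (φ : Sym2 V → ℕ) (δ μ : ℕ) (u : V) (e : Sym2 V) : Prop :=
  e ∈ G.edgeSet ∧ (φ e = δ ∨ φ e = μ) ∧ ∃ v, v ∈ e ∧ (chainGraph G φ δ μ).Reachable u v

open Classical in
/-- Swap the colors `δ` and `μ` on the chain component of `u`. -/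
noncomputable def swapc (G : SimpleGraph V) (φ : Sym2 V → ℕ) (δ μ : ℕ) (u : V) :
    Sym2 V → ℕ :=
  fun e => if InChain G φ δ μ u e then (if φ e = δ then μ else δ) else φ e

variable [Fintype V]

section Swap

variable {G : SimpleGraph V} {φ : Sym2 V → ℕ} {δ μ : ℕ} {u : V} {k : ℕ}

lemma inChain_all_mem {e : Sym2 V} (h : InChain G φ δ μ u e) {v : V} (hv : v ∈ e) :
    (chainGraph G φ δ μ).Reachable u v := by
  obtain ⟨he, hcol, w, hw, hrw⟩ := h
  exact hrw.trans (chain_reach_of_mem he hcol hw hv)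

lemma swapc_pos {e : Sym2 V} (h : InChain G φ δ μ u e) :
    swapc G φ δ μ u e = if φ e = δ then μ else δ := by
  unfold swapc; rw [if_pos h]

lemma swapc_neg {e : Sym2 V} (h : ¬ InChain G φ δ μ u e) :
    swapc G φ δ μ u e = φ e := by
  unfold swapc; rw [if_neg h]

lemma swapc_eq_of_not_reach {e : Sym2 V} {v : V} (hv : v ∈ e)
    (hr : ¬ (chainGraph G φ δ μ).Reachable u v) : swapc G φ δ μ u e = φ e := by
  apply swapc_neg
  intro h
  exact hr (inChain_all_mem h hv)

lemma swapc_mem_pair {e : Sym2 V} (h : InChain G φ δ μ u e) :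
    swapc G φ δ μ u e = δ ∨ swapc G φ δ μ u e = μ := by
  rw [swapc_pos h]
  by_cases hc : φ e = δ <;> simp [hc]

lemma swapc_proper (hprop : IsProperEdgeColoring G k φ)
    (hδ : δ ∈ Finset.Icc 1 k) (hμ : μ ∈ Finset.Icc 1 k) :
    IsProperEdgeColoring G k (swapc G φ δ μ u) := by
  constructor
  · intro e he
    by_cases h : InChain G φ δ μ u e
    · rcases swapc_mem_pair h with h' | h' <;> rw [h']
      · exact hδ
      · exact hμ
    · rw [swapc_neg h]; exact hprop.1 e he
  · intro e he f hf hef hshare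
    obtain ⟨v, hve, hvf⟩ := hshare
    have hcol := hprop.2 e he f hf hef ⟨v, hve, hvf⟩
    by_cases h1 : InChain G φ δ μ u e <;> by_cases h2 : InChain G φ δ μ u f
    · rw [swapc_pos h1, swapc_pos h2]
      rcases h1.2.1 with ha | ha <;> rcases h2.2.1 with hb | hb
      · exact absurd (ha.trans hb.symm) hcol
      · rw [if_pos ha, if_neg (show ¬ φ f = δ from fun h => hcol (ha.trans h.symm))]
        intro h
        exact hcol (ha.trans ((h.symm.trans hb.symm : (δ:ℕ) = φ f)))
      · by_cases hed : φ e = δ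
        · exact absurd (hed.trans hb.symm) hcol
        · rw [if_neg hed, if_pos hb]
          intro h
          exact hed (ha.trans h.symm)
      · exact absurd (ha.trans hb.symm) hcol
    · -- e swapped, f not : then φ f ∉ {δ, μ}
      have hfcol : ¬ (φ f = δ ∨ φ f = μ) := by
        intro hc
        exact h2 ⟨hf, hc, v, hvf, inChain_all_mem h1 hve⟩
      push_neg at hfcol
      rw [swapc_neg h2]
      rcases swapc_mem_pair h1 with h' | h' <;> rw [h']
      · exact fun hcontra => hfcol.1 hcontra.symm
      · exact fun hcontra => hfcol.2 hcontra.symm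
    · have hecol : ¬ (φ e = δ ∨ φ e = μ) := by
        intro hc
        exact h1 ⟨he, hc, v, hve, inChain_all_mem h2 hvf⟩
      push_neg at hecol
      rw [swapc_neg h1]
      rcases swapc_mem_pair h2 with h' | h' <;> rw [h']
      · exact fun hcontra => hecol.1 hcontra
      · exact fun hcontra => hecol.2 hcontra
    · rw [swapc_neg h1, swapc_neg h2]; exact hcol

lemma swap_missing_far {v : V} (hr : ¬ (chainGraph G φ δ μ).Reachable u v) :
    missingColors G k (swapc G φ δ μ u) v = missingColors G k φ v := by
  unfold missingColors
  ext α
  simp only [Set.mem_setOf_eq]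
  have key : ∀ e ∈ G.edgeSet, v ∈ e → swapc G φ δ μ u e = φ e :=
    fun e _ hv => swapc_eq_of_not_reach hv hr
  constructor
  · rintro ⟨h1, h2⟩
    exact ⟨h1, fun ⟨e, he, hve, hce⟩ => h2 ⟨e, he, hve, (key e he hve) ▸ hce⟩⟩
  · rintro ⟨h1, h2⟩
    exact ⟨h1, fun ⟨e, he, hve, hce⟩ => h2 ⟨e, he, hve, (key e he hve) ▸ hce⟩⟩

lemma swap_missing_of_ne {α : ℕ} (hα : α ≠ δ) (hβ : α ≠ μ) (v : V) :
    α ∈ missingColors G k (swapc G φ δ μ u) v ↔ α ∈ missingColors G k φ v := by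
  unfold missingColors
  simp only [Set.mem_setOf_eq]
  have key : ∀ e, (swapc G φ δ μ u e = α ↔ φ e = α) := by
    intro e
    by_cases h : InChain G φ δ μ u e
    · constructor
      · intro hc
        rcases swapc_mem_pair h with h' | h' <;> rw [h'] at hc
        · exact absurd hc.symm hα
        · exact absurd hc.symm hβ
      · intro hc
        rcases h.2.1 with h' | h'
        · exact absurd (h' ▸ hc : δ = α) (fun hh => hα hh.symm)
        · exact absurd (h' ▸ hc : μ = α) (fun hh => hβ hh.symm)
    · rw [swapc_neg h]
  constructor
  · rintro ⟨h1, h2⟩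
    exact ⟨h1, fun ⟨e, he, hve, hce⟩ => h2 ⟨e, he, hve, (key e).mpr hce⟩⟩
  · rintro ⟨h1, h2⟩
    exact ⟨h1, fun ⟨e, he, hve, hce⟩ => h2 ⟨e, he, hve, (key e).mp hce⟩⟩

lemma swap_missing_near_dm (hδμ : δ ≠ μ) (hδ : δ ∈ Finset.Icc 1 k) (hμ : μ ∈ Finset.Icc 1 k)
    {v : V} (hr : (chainGraph G φ δ μ).Reachable u v) :
    δ ∈ missingColors G k (swapc G φ δ μ u) v ↔ μ ∈ missingColors G k φ v := by
  unfold missingColors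
  simp only [Set.mem_setOf_eq]
  constructor
  · rintro ⟨_, h2⟩
    refine ⟨hμ, ?_⟩
    rintro ⟨e, he, hve, hce⟩
    have hin : InChain G φ δ μ u e := ⟨he, Or.inr hce, v, hve, hr⟩
    refine h2 ⟨e, he, hve, ?_⟩
    rw [swapc_pos hin, if_neg (by rw [hce]; exact fun h => hδμ h.symm)]
  · rintro ⟨_, h2⟩
    refine ⟨hδ, ?_⟩
    rintro ⟨e, he, hve, hce⟩
    by_cases hin : InChain G φ δ μ u e
    · rw [swapc_pos hin] at hce
      by_cases hc : φ e = δ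
      · rw [if_pos hc] at hce; exact hδμ hce.symm
      · rw [if_neg hc] at hce
        rcases hin.2.1 with h' | h'
        · exact hc h'
        · exact h2 ⟨e, he, hve, h'⟩
    · rw [swapc_neg hin] at hce
      exact hin ⟨he, Or.inl hce, v, hve, hr⟩

lemma swap_missing_near_md (hδμ : δ ≠ μ) (hδ : δ ∈ Finset.Icc 1 k) (hμ : μ ∈ Finset.Icc 1 k)
    {v : V} (hr : (chainGraph G φ δ μ).Reachable u v) :
    μ ∈ missingColors G k (swapc G φ δ μ u) v ↔ δ ∈ missingColors G k φ v := by
  unfold missingColors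
  simp only [Set.mem_setOf_eq]
  constructor
  · rintro ⟨_, h2⟩
    refine ⟨hδ, ?_⟩
    rintro ⟨e, he, hve, hce⟩
    have hin : InChain G φ δ μ u e := ⟨he, Or.inl hce, v, hve, hr⟩
    refine h2 ⟨e, he, hve, ?_⟩
    rw [swapc_pos hin, if_pos hce]
  · rintro ⟨_, h2⟩
    refine ⟨hμ, ?_⟩
    rintro ⟨e, he, hve, hce⟩
    by_cases hin : InChain G φ δ μ u e
    · rw [swapc_pos hin] at hce
      by_cases hc : φ e = δ
      · rw [if_pos hc] at hce
        exact h2 ⟨e, he, hve, hc⟩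
      · rw [if_neg hc] at hce; exact hδμ hce
    · rw [swapc_neg hin] at hce
      exact hin ⟨he, Or.inr hce, v, hve, hr⟩

end Swap

section PathCount

open SimpleGraph.Walk

open Classical in
lemma degree_mono {D D' : SimpleGraph V} (h : D' ≤ D) (v : V) :
    D'.degree v ≤ D.degree v := by
  classical
  apply Finset.card_le_card
  intro w hw
  rw [SimpleGraph.mem_neighborFinset] at hw ⊢
  exact h hw

open Classical in
lemma path_nested : ∀ (n : ℕ) (D : SimpleGraph V), (∀ z, D.degree z ≤ 2) →
    ∀ (a : V), D.degree a ≤ 1 → ∀ (v w : V) (p : D.Walk a v) (q : D.Walk a w),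
    p.IsPath → q.IsPath → p.length ≤ q.length → p.length = n →
    ∀ x ∈ p.support, x ∈ q.support := by
  intro n
  induction n with
  | zero =>
    intro D _ a _ v w p q _ _ _ hlen x hx
    cases p with
    | nil =>
      simp only [support_nil, List.mem_singleton] at hx
      subst hx
      exact q.start_mem_support
    | cons h p' => simp at hlen
  | succ n ih =>
    intro D hdeg2 a hda v w p q hp hq hle hlen x hx
    cases p with
    | nil => simp at hlen
    | cons hax p' =>
      rename_i x₀
      cases q with
      | nil =>
        simp only [length_nil, Nat.le_zero, length_cons] at hle
        omega
      | cons hay q' =>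
        rename_i y₀
        -- the two first steps coincide since `a` has degree ≤ 1
        have hxy : x₀ = y₀ := by
          have hx0 : x₀ ∈ D.neighborFinset a := (D.mem_neighborFinset a x₀).mpr hax
          have hy0 : y₀ ∈ D.neighborFinset a := (D.mem_neighborFinset a y₀).mpr hay
          exact Finset.card_le_one.mp hda _ hx0 _ hy0
        subst hxy
        set D' := D.deleteEdges {s(a, x₀)} with hD'
        have hD'le : D' ≤ D := SimpleGraph.deleteEdges_le _
        have hdeg2' : ∀ z, D'.degree z ≤ 2 := fun z => (degree_mono hD'le z).trans (hdeg2 z)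
        have hnbr : D'.neighborFinset x₀ = (D.neighborFinset x₀).erase a := by
          ext z
          simp only [SimpleGraph.mem_neighborFinset, Finset.mem_erase]
          rw [hD', SimpleGraph.deleteEdges_adj]
          simp only [Set.mem_singleton_iff]
          constructor
          · rintro ⟨hadj, hne⟩
            refine ⟨?_, hadj⟩
            rintro rfl
            exact hne (Sym2.eq_swap)
          · rintro ⟨hne, hadj⟩
            refine ⟨hadj, ?_⟩
            intro hcontra
            rw [Sym2.eq_iff] at hcontra
            rcases hcontra with ⟨h1, h2⟩ | ⟨h1, h2⟩
            · exact hax.ne h1.symm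
            · exact hne h2
        have hdegx : D'.degree x₀ ≤ 1 := by
          rw [SimpleGraph.degree, hnbr, Finset.card_erase_of_mem
            ((D.mem_neighborFinset x₀ a).mpr hax.symm)]
          have := hdeg2 x₀
          rw [SimpleGraph.degree] at this
          omega
        have hp' : p'.IsPath := hp.of_cons
        have hq' : q'.IsPath := hq.of_cons
        have hap' : a ∉ p'.support := ((cons_isPath_iff _ _).mp hp).2
        have haq' : a ∉ q'.support := ((cons_isPath_iff _ _).mp hq).2
        have hedp : ∀ e ∈ p'.edges, e ∈ D'.edgeSet := by
          intro e he
          rw [hD', SimpleGraph.edgeSet_deleteEdges]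
          refine ⟨p'.edges_subset_edgeSet he, ?_⟩
          simp only [Set.mem_singleton_iff]
          rintro rfl
          exact hap' (p'.fst_mem_support_of_mem_edges he)
        have hedq : ∀ e ∈ q'.edges, e ∈ D'.edgeSet := by
          intro e he
          rw [hD', SimpleGraph.edgeSet_deleteEdges]
          refine ⟨q'.edges_subset_edgeSet he, ?_⟩
          simp only [Set.mem_singleton_iff]
          rintro rfl
          exact haq' (q'.fst_mem_support_of_mem_edges he)
        have hres := ih D' hdeg2' x₀ hdegx v w (p'.transfer D' hedp) (q'.transfer D' hedq)
          (hp'.transfer _) (hq'.transfer _)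
          (by rw [length_transfer, length_transfer]; simpa using hle)
          (by rw [length_transfer]; simpa using hlen)
        simp only [support_cons, List.mem_cons] at hx ⊢
        rcases hx with rfl | hx
        · exact Or.inl rfl
        · right
          have := hres x (by rwa [support_transfer])
          rwa [support_transfer] at this

open Classical in
lemma inner_endpoint {D : SimpleGraph V} (hdeg2 : ∀ z, D.degree z ≤ 2) {a b c : V}
    (hab : a ≠ b) (hbc : b ≠ c) (hdb : D.degree b ≤ 1)
    {q : D.Walk a c} (hq : q.IsPath) (hbq : b ∈ q.support) : False := by
  classical
  set q1 := q.takeUntil b hbq with hq1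
  set q2 := q.dropUntil b hbq with hq2
  have hq1p : q1.IsPath := hq.takeUntil _
  have hq2p : q2.IsPath := hq.dropUntil _
  have hspec : q1.append q2 = q := q.take_spec hbq
  have hnodup : q.edges.Nodup := hq.isTrail.edges_nodup
  have hedges : q.edges = q1.edges ++ q2.edges := by
    rw [← hspec, edges_append]
  rw [hedges] at hnodup
  have hdisj : q1.edges.Disjoint q2.edges := List.disjoint_of_nodup_append hnodup
  -- first neighbor from the b-side of q1 (via reverse) and of q2
  set q1r := q1.reverse with hq1r
  have hq1rp : q1r.IsPath := hq1p.reverse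
  cases hq1rev : q1r with
  | nil => exact hab rfl
  | cons h1 r1 =>
    rename_i u1
    cases hq2c : q2 with
    | nil => exact hbc rfl
    | cons h2 r2 =>
      rename_i u2
      have he1 : s(b, u1) ∈ q1.edges := by
        have : s(b, u1) ∈ q1r.edges := by rw [hq1rev]; simp
        rwa [hq1r, edges_reverse, List.mem_reverse] at this
      have he2 : s(b, u2) ∈ q2.edges := by rw [hq2c]; simp
      have hne : u1 ≠ u2 := by
        rintro rfl
        exact hdisj he1 he2
      have h2le : 2 ≤ D.degree b := by
        have hsub : ({u1, u2} : Finset V) ⊆ D.neighborFinset b := by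
          intro z hz
          rcases Finset.mem_insert.mp hz with rfl | hz
          · exact (D.mem_neighborFinset b z).mpr h1
          · rw [Finset.mem_singleton] at hz
            subst hz
            exact (D.mem_neighborFinset b z).mpr h2
        calc 2 = ({u1, u2} : Finset V).card := by rw [Finset.card_insert_of_notMem (by simpa using hne), Finset.card_singleton]
          _ ≤ _ := Finset.card_le_card hsub
      omega

open Classical in
lemma three_endpoints {D : SimpleGraph V} (hdeg2 : ∀ z, D.degree z ≤ 2) {a b c : V}
    (hab : a ≠ b) (hac : a ≠ c) (hbc : b ≠ c)
    (hda : D.degree a ≤ 1) (hdb : D.degree b ≤ 1) (hdc : D.degree c ≤ 1)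
    (h1 : D.Reachable a b) (h2 : D.Reachable a c) : False := by
  classical
  obtain ⟨p0⟩ := h1
  obtain ⟨q0⟩ := h2
  set p := p0.toPath.1 with hp0
  set q := q0.toPath.1 with hq0
  have hp : p.IsPath := p0.toPath.2
  have hq : q.IsPath := q0.toPath.2
  rcases le_total p.length q.length with hle | hle
  · have hbq : b ∈ q.support :=
      path_nested p.length D hdeg2 a hda b c p q hp hq hle rfl b p.end_mem_support
    exact inner_endpoint hdeg2 hab hbc hdb hq hbq
  · have hcq : c ∈ p.support :=
      path_nested q.length D hdeg2 a hda c b q p hq hp hle rfl c q.end_mem_support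
    exact inner_endpoint hdeg2 hac (Ne.symm hbc) hdc hp hcq

end PathCount

section Fan

variable {H : SimpleGraph V} {k : ℕ} {x y₁ : V}

/-- A multifan at `x` with respect to the uncolored edge `s(x, y₁)` and the coloring `φ`
of `H − s(x, y₁)`. -/
def MF (H : SimpleGraph V) (k : ℕ) (x y₁ : V) (φ : Sym2 V → ℕ) (p : ℕ) (ys : ℕ → V) : Prop :=
  ys 0 = y₁ ∧ (∀ i < p, H.Adj x (ys i)) ∧ (∀ i < p, ∀ j < p, ys i = ys j → i = j) ∧
  (∀ i, 0 < i → i < p → ∃ j < i,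
    φ s(x, ys i) ∈ missingColors (H.deleteEdges {s(x, y₁)}) k φ (ys j))

lemma MF.trunc {φ : Sym2 V → ℕ} {p q : ℕ} {ys : ℕ → V} (h : MF H k x y₁ φ p ys)
    (hq : q ≤ p) : MF H k x y₁ φ q ys :=
  ⟨h.1, fun i hi => h.2.1 i (lt_of_lt_of_le hi hq),
   fun i hi j hj => h.2.2.1 i (lt_of_lt_of_le hi hq) j (lt_of_lt_of_le hj hq),
   fun i h0 hi => h.2.2.2 i h0 (lt_of_lt_of_le hi hq)⟩

lemma present_not_missing {G : SimpleGraph V} {φ : Sym2 V → ℕ} {e : Sym2 V} {v : V}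
    (he : e ∈ G.edgeSet) (hv : v ∈ e) : φ e ∉ missingColors G k φ v := by
  rintro ⟨_, h2⟩
  exact h2 ⟨e, he, hv, rfl⟩

lemma MF.edge_mem {φ : Sym2 V → ℕ} {p : ℕ} {ys : ℕ → V} (hxy : H.Adj x y₁)
    (h : MF H k x y₁ φ p ys) {i : ℕ} (h0 : 0 < i) (hi : i < p) :
    s(x, ys i) ∈ (H.deleteEdges {s(x, y₁)}).edgeSet := by
  rw [SimpleGraph.edgeSet_deleteEdges]
  refine ⟨(h.2.1 i hi), ?_⟩
  simp only [Set.mem_singleton_iff]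
  intro hcontra
  rw [Sym2.eq_iff] at hcontra
  rcases hcontra with ⟨_, h2⟩ | ⟨h1, h2⟩
  · have := h.2.2.1 i hi 0 (lt_of_le_of_lt (Nat.zero_le i) hi) (h2.trans h.1.symm)
    omega
  · exact (h.2.1 i hi).ne h2.symm

/-- The shift lemma: if some color is missing both at `x` and at a fan vertex, the whole
graph can be colored. -/
lemma shift (hxy : H.Adj x y₁) :
    ∀ (i : ℕ) (φ : Sym2 V → ℕ) (p : ℕ) (ys : ℕ → V),
    IsProperEdgeColoring (H.deleteEdges {s(x, y₁)}) k φ → MF H k x y₁ φ p ys → i < p →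
    ∀ δ, δ ∈ missingColors (H.deleteEdges {s(x, y₁)}) k φ x →
      δ ∈ missingColors (H.deleteEdges {s(x, y₁)}) k φ (ys i) → EdgeColorable H k := by
  intro i
  induction i using Nat.strong_induction_on with
  | _ i ih =>
    intro φ p ys hprop hMF hi δ hδx hδy
    set G' := H.deleteEdges {s(x, y₁)} with hG'
    rcases Nat.eq_zero_or_pos i with rfl | h0
    · rw [hMF.1] at hδy
      exact ⟨recolor φ s(x, y₁) δ, recolor_proper hxy hprop hδx hδy⟩
    · obtain ⟨j, hji, hγ⟩ := hMF.2.2.2 i h0 hi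
      set e_i := s(x, ys i) with he_i
      set γ := φ e_i with hγdef
      have hei_mem : e_i ∈ G'.edgeSet := hMF.edge_mem hxy h0 hi
      have hadj' : G'.Adj x (ys i) := (SimpleGraph.mem_edgeSet _).mp hei_mem
      have hγδ : γ ≠ δ := by
        intro hcontra
        exact present_not_missing hei_mem (Sym2.mem_mk_left _ _) (hcontra ▸ hδx)
      set φs := recolor φ e_i δ with hφs
      have hGle : G'.deleteEdges {e_i} ≤ G' := SimpleGraph.deleteEdges_le _
      have hprop' : IsProperEdgeColoring G' k φs :=
        recolor_proper hadj' (proper_mono hGle hprop)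
          (missing_anti hGle x hδx) (missing_anti hGle (ys i) hδy)
      have hysj_ne : ys j ∉ e_i := by
        rw [he_i, Sym2.mem_iff]
        rintro (hc | hc)
        · exact (hMF.2.1 j (hji.trans hi)).ne hc.symm
        · have := hMF.2.2.1 j (hji.trans hi) i hi hc
          omega
      have hγx : γ ∈ missingColors G' k φs x :=
        missing_recolor_freed hprop hei_mem hγδ (Sym2.mem_mk_left _ _)
      have hγj : γ ∈ missingColors G' k φs (ys j) := by
        rw [hφs, missing_recolor_not_mem hysj_ne]
        exact hγ
      have hMFs : MF H k x y₁ φs (j + 1) ys := by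
        refine ⟨hMF.1, fun m hm => hMF.2.1 m (by omega),
          fun m hm m' hm' => hMF.2.2.1 m (by omega) m' (by omega), ?_⟩
        intro m hm0 hm
        obtain ⟨jm, hjm, hcol⟩ := hMF.2.2.2 m hm0 (by omega)
        refine ⟨jm, hjm, ?_⟩
        have hne_edge : s(x, ys m) ≠ e_i := by
          rw [he_i]
          intro hcontra
          rw [Sym2.eq_iff] at hcontra
          rcases hcontra with ⟨_, h2⟩ | ⟨h1, _⟩
          · have := hMF.2.2.1 m (by omega) i hi h2
            omega
          · exact (hMF.2.1 i hi).ne h1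
        have hjm_ne : ys jm ∉ e_i := by
          rw [he_i, Sym2.mem_iff]
          rintro (hc | hc)
          · exact (hMF.2.1 jm (by omega)).ne hc.symm
          · have := hMF.2.2.1 jm (by omega) i hi hc
            omega
        rw [hφs, recolor_apply_ne hne_edge, missing_recolor_not_mem hjm_ne]
        exact hcol
      exact ih j hji φs (j + 1) ys hprop' hMFs (by omega) γ hγx hγj

/-- Elementarity of multifans: the missing color sets of the fan vertices are pairwise
disjoint. -/
lemma elem (hxy : H.Adj x y₁) (hH : ¬ EdgeColorable H k)
    (hdx : (H.deleteEdges {s(x, y₁)}).degree x < k) :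
    ∀ (p : ℕ) (φ : Sym2 V → ℕ) (ys : ℕ → V),
    IsProperEdgeColoring (H.deleteEdges {s(x, y₁)}) k φ → MF H k x y₁ φ p ys →
    ∀ t j, t < j → j < p → ∀ μ,
      μ ∈ missingColors (H.deleteEdges {s(x, y₁)}) k φ (ys t) →
      μ ∈ missingColors (H.deleteEdges {s(x, y₁)}) k φ (ys j) → False := by
  intro p
  induction p using Nat.strong_induction_on with
  | _ p ih =>
    intro φ ys hprop hMF t j ht hj μ hμt hμj
    set G' := H.deleteEdges {s(x, y₁)} with hG'
    by_cases hj1 : j + 1 < p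
    · exact ih (j + 1) hj1 φ ys hprop (hMF.trunc (by omega)) t j ht (by omega) μ hμt hμj
    have hjp : j + 1 = p := by omega
    obtain ⟨δ, hδx⟩ := missing_nonempty (G := G') (c := φ) hdx
    have hμx : μ ∉ missingColors G' k φ x := by
      intro hc
      exact hH (shift hxy t φ p ys hprop hMF (by omega) μ hc hμt)
    have hδμ : δ ≠ μ := fun h => hμx (h ▸ hδx)
    have hδIcc : δ ∈ Finset.Icc 1 k := hδx.1
    have hμIcc : μ ∈ Finset.Icc 1 k := hμt.1
    set D := chainGraph G' φ δ μ with hD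
    have hdeg2 : ∀ z, D.degree z ≤ 2 := fun z => chain_deg_le_two hprop z
    have hdx1 : D.degree x ≤ 1 := chain_deg_le_one hprop (Or.inl hδx)
    have hdt1 : D.degree (ys t) ≤ 1 := chain_deg_le_one hprop (Or.inr hμt)
    have hdj1 : D.degree (ys j) ≤ 1 := chain_deg_le_one hprop (Or.inr hμj)
    have hxt : x ≠ ys t := (hMF.2.1 t (by omega)).ne
    have hxj : x ≠ ys j := (hMF.2.1 j (by omega)).ne
    have htj : ys t ≠ ys j := by
      intro hc
      have := hMF.2.2.1 t (by omega) j (by omega) hc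
      omega
    -- common facts for the fan conditions under the swapped coloring
    have hfanfact : ∀ m, 0 < m → m < p → ∃ jm < m,
        (φ s(x, ys m) ∈ missingColors G' k φ (ys jm)) ∧ φ s(x, ys m) ≠ δ ∧
          (φ s(x, ys m) = μ → jm = t) := by
      intro m hm0 hmp
      obtain ⟨jm, hjm, hcol⟩ := hMF.2.2.2 m hm0 hmp
      have hem : s(x, ys m) ∈ G'.edgeSet := hMF.edge_mem hxy hm0 hmp
      have hγδ : φ s(x, ys m) ≠ δ := by
        intro hc
        exact present_not_missing hem (Sym2.mem_mk_left _ _) (hc ▸ hδx)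
      refine ⟨jm, hjm, hcol, hγδ, ?_⟩
      intro hγμ
      by_contra hjmt
      -- μ is missing at ys jm and at ys t (or ys j) with both indices < p - 1 : IH
      have hμjm : μ ∈ missingColors G' k φ (ys jm) := hγμ ▸ hcol
      have hjmj : jm ≠ j := by
        intro hc
        omega
      have hjm_lt : jm < p - 1 := by omega
      have ht_lt : t < p - 1 := by omega
      rcases Nat.lt_or_ge jm t with hlt | hge
      · exact ih (max jm t + 1) (by omega) φ ys hprop (hMF.trunc (by omega)) jm t hlt
          (by omega) μ hμjm hμt
      · have hlt : t < jm := by omega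
        exact ih (max jm t + 1) (by omega) φ ys hprop (hMF.trunc (by omega)) t jm hlt
          (by omega) μ hμt hμjm
    by_cases hsame : D.Reachable (ys j) (ys t)
    · -- same chain component: x is not on it
      have hxnot : ¬ D.Reachable (ys j) x := by
        intro hr
        exact three_endpoints hdeg2 htj.symm (Ne.symm hxj) (Ne.symm hxt) hdj1 hdt1 hdx1
          hsame hr
      set φ' := swapc G' φ δ μ (ys j) with hφ'
      have hprop' : IsProperEdgeColoring G' k φ' := swapc_proper hprop hδIcc hμIcc
      have hδx' : δ ∈ missingColors G' k φ' x := by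
        rw [hφ', swap_missing_far hxnot]
        exact hδx
      have hδt' : δ ∈ missingColors G' k φ' (ys t) :=
        (swap_missing_near_dm hδμ hδIcc hμIcc hsame).mpr hμt
      have hMF' : MF H k x y₁ φ' (t + 1) ys := by
        refine ⟨hMF.1, fun m hm => hMF.2.1 m (by omega),
          fun m hm m' hm' => hMF.2.2.1 m (by omega) m' (by omega), ?_⟩
        intro m hm0 hm
        obtain ⟨jm, hjm, hcol, hγδ, hγμt⟩ := hfanfact m hm0 (by omega)
        have hγμ : φ s(x, ys m) ≠ μ := by
          intro hc
          have := hγμt hc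
          omega
        have hedge : φ' s(x, ys m) = φ s(x, ys m) :=
          swapc_eq_of_not_reach (Sym2.mem_mk_left _ _) hxnot
        refine ⟨jm, hjm, ?_⟩
        rw [hedge]
        exact (swap_missing_of_ne hγδ hγμ _).mpr hcol
      exact hH (shift hxy t φ' (t + 1) ys hprop' hMF' (by omega) δ hδx' hδt')
    · by_cases h2a : D.Reachable (ys t) x
      · -- swap the component of ys j ; x is not on it
        have hxnotj : ¬ D.Reachable (ys j) x := by
          intro hr
          exact hsame (hr.trans h2a.symm)
        set φ' := swapc G' φ δ μ (ys j) with hφ'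
        have hprop' : IsProperEdgeColoring G' k φ' := swapc_proper hprop hδIcc hμIcc
        have hδx' : δ ∈ missingColors G' k φ' x := by
          rw [hφ', swap_missing_far hxnotj]
          exact hδx
        have hδj' : δ ∈ missingColors G' k φ' (ys j) :=
          (swap_missing_near_dm hδμ hδIcc hμIcc (SimpleGraph.Reachable.refl _)).mpr hμj
        have hMF' : MF H k x y₁ φ' p ys := by
          refine ⟨hMF.1, hMF.2.1, hMF.2.2.1, ?_⟩
          intro m hm0 hm
          obtain ⟨jm, hjm, hcol, hγδ, hγμt⟩ := hfanfact m hm0 hm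
          have hedge : φ' s(x, ys m) = φ s(x, ys m) :=
            swapc_eq_of_not_reach (Sym2.mem_mk_left _ _) hxnotj
          by_cases hγμ : φ s(x, ys m) = μ
          · have hjmt : jm = t := hγμt hγμ
            refine ⟨t, by omega, ?_⟩
            rw [hedge]
            have : missingColors G' k φ' (ys t) = missingColors G' k φ (ys t) := by
              rw [hφ']
              exact swap_missing_far hsame
            rw [this]
            exact hjmt ▸ hcol
          · refine ⟨jm, hjm, ?_⟩
            rw [hedge]
            exact (swap_missing_of_ne hγδ hγμ _).mpr hcol
        exact hH (shift hxy j φ' p ys hprop' hMF' (by omega) δ hδx' hδj')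
      · -- swap the component of ys t ; x is not on it
        set φ' := swapc G' φ δ μ (ys t) with hφ'
        have hprop' : IsProperEdgeColoring G' k φ' := swapc_proper hprop hδIcc hμIcc
        have hδx' : δ ∈ missingColors G' k φ' x := by
          rw [hφ', swap_missing_far h2a]
          exact hδx
        have hδt' : δ ∈ missingColors G' k φ' (ys t) :=
          (swap_missing_near_dm hδμ hδIcc hμIcc (SimpleGraph.Reachable.refl _)).mpr hμt
        have hMF' : MF H k x y₁ φ' (t + 1) ys := by
          refine ⟨hMF.1, fun m hm => hMF.2.1 m (by omega),
            fun m hm m' hm' => hMF.2.2.1 m (by omega) m' (by omega), ?_⟩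
          intro m hm0 hm
          obtain ⟨jm, hjm, hcol, hγδ, hγμt⟩ := hfanfact m hm0 (by omega)
          have hγμ : φ s(x, ys m) ≠ μ := by
            intro hc
            have := hγμt hc
            omega
          have hedge : φ' s(x, ys m) = φ s(x, ys m) :=
            swapc_eq_of_not_reach (Sym2.mem_mk_left _ _) h2a
          refine ⟨jm, hjm, ?_⟩
          rw [hedge]
          exact (swap_missing_of_ne hγδ hγμ _).mpr hcol
        exact hH (shift hxy t φ' (t + 1) ys hprop' hMF' (by omega) δ hδx' hδt')

end Fan

open Classical in
lemma deg_del_endpoint {H : SimpleGraph V} {a b : V} (hab : H.Adj a b) :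
    (H.deleteEdges {s(a, b)}).degree a + 1 = H.degree a := by
  classical
  have hnbr : (H.deleteEdges {s(a, b)}).neighborFinset a = (H.neighborFinset a).erase b := by
    ext z
    simp only [SimpleGraph.mem_neighborFinset, Finset.mem_erase, SimpleGraph.deleteEdges_adj,
      Set.mem_singleton_iff]
    constructor
    · rintro ⟨hadj, hne⟩
      refine ⟨?_, hadj⟩
      rintro rfl
      exact hne rfl
    · rintro ⟨hne, hadj⟩
      refine ⟨hadj, ?_⟩
      intro hc
      rw [Sym2.eq_iff] at hc
      rcases hc with ⟨_, h2⟩ | ⟨h1, _⟩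
      · exact hne h2
      · exact hab.ne h1
  rw [SimpleGraph.degree, SimpleGraph.degree, hnbr,
    Finset.card_erase_of_mem ((H.mem_neighborFinset a b).mpr hab)]
  have : b ∈ H.neighborFinset a := (H.mem_neighborFinset a b).mpr hab
  have := Finset.card_pos.mpr ⟨b, this⟩
  omega

open Classical in
lemma deg_del_other {H : SimpleGraph V} {a b v : V} (hv1 : v ≠ a) (hv2 : v ≠ b) :
    (H.deleteEdges {s(a, b)}).degree v = H.degree v := by
  classical
  have hnbr : (H.deleteEdges {s(a, b)}).neighborFinset v = H.neighborFinset v := by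
    ext z
    simp only [SimpleGraph.mem_neighborFinset, SimpleGraph.deleteEdges_adj,
      Set.mem_singleton_iff]
    constructor
    · exact fun h => h.1
    · intro h
      refine ⟨h, ?_⟩
      intro hc
      rw [Sym2.eq_iff] at hc
      rcases hc with ⟨h1, _⟩ | ⟨h1, _⟩
      · exact hv1 h1
      · exact hv2 h1
  rw [SimpleGraph.degree, SimpleGraph.degree, hnbr]

open Classical in
/-- Vizing's adjacency lemma for an edge-critical non-`k`-colorable graph. -/
lemma val {H : SimpleGraph V} {k : ℕ} (hH : ¬ EdgeColorable H k)
    (hcrit : ∀ e ∈ H.edgeSet, EdgeColorable (H.deleteEdges {e}) k)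
    (hdeg : ∀ v, H.degree v ≤ k) {x y : V} (hxy : H.Adj x y) :
    k + 1 ≤ H.degree y +
      ((H.neighborFinset x).filter (fun z => z ≠ y ∧ H.degree z = k)).card := by
  classical
  set G' := H.deleteEdges {s(x, y)} with hG'
  obtain ⟨φ, hprop⟩ := hcrit s(x, y) hxy
  have hG'le : G' ≤ H := SimpleGraph.deleteEdges_le _
  have hdegx1 : 1 ≤ H.degree x :=
    Finset.card_pos.mpr ⟨y, (H.mem_neighborFinset x y).mpr hxy⟩
  have hdegy1 : 1 ≤ H.degree y :=
    Finset.card_pos.mpr ⟨x, (H.mem_neighborFinset y x).mpr hxy.symm⟩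
  have hdx' : G'.degree x + 1 = H.degree x := by
    rw [hG']; exact deg_del_endpoint hxy
  have hdx : G'.degree x < k := by
    have := hdeg x
    omega
  have hdy : G'.degree y + 1 = H.degree y := by
    rw [hG']
    have := deg_del_endpoint hxy.symm
    rwa [Sym2.eq_swap] at this
  -- the set of possible fan lengths
  set S : Set ℕ := {p | ∃ ys : ℕ → V, MF H k x y φ p ys} with hS
  have h1S : 1 ∈ S := by
    refine ⟨fun _ => y, rfl, fun i hi => hxy, fun i hi j hj _ => by omega,
      fun i h0 hi => by omega⟩
  have hbound : ∀ p ∈ S, p ≤ Fintype.card V := by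
    rintro p ⟨ys, hMF⟩
    calc p = ((Finset.range p).image ys).card := by
          rw [Finset.card_image_of_injOn, Finset.card_range]
          intro i hi j hj hij
          exact hMF.2.2.1 i (Finset.mem_range.mp hi) j (Finset.mem_range.mp hj) hij
      _ ≤ Fintype.card V := by
          rw [← Finset.card_univ]
          exact Finset.card_le_card (Finset.subset_univ _)
  set T : Finset ℕ := (Finset.range (Fintype.card V + 1)).filter (· ∈ S) with hT
  have h1T : 1 ∈ T := by
    rw [hT, Finset.mem_filter, Finset.mem_range]
    exact ⟨by have := hbound 1 h1S; omega, h1S⟩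
  set pm := T.max' ⟨1, h1T⟩ with hpm
  have hpmS : pm ∈ S := (Finset.mem_filter.mp (T.max'_mem ⟨1, h1T⟩)).2
  have hpm1 : 1 ≤ pm := T.le_max' 1 h1T
  have hpmmax : pm + 1 ∉ S := by
    intro hc
    have : pm + 1 ∈ T := by
      rw [hT, Finset.mem_filter, Finset.mem_range]
      exact ⟨by have := hbound _ hc; omega, hc⟩
    have := T.le_max' _ this
    omega
  obtain ⟨ys, hMF⟩ := hpmS
  -- maximality: every color missing at a fan vertex appears on a fan edge
  have hext : ∀ γ i, i < pm → γ ∈ missingColors G' k φ (ys i) →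
      ∃ j, 1 ≤ j ∧ j < pm ∧ γ = φ s(x, ys j) := by
    intro γ i hi hγ
    have hγx : γ ∉ missingColors G' k φ x := by
      intro hc
      exact hH (shift hxy i φ pm ys hprop hMF hi γ hc hγ)
    have hγIcc : γ ∈ Finset.Icc 1 k := hγ.1
    have hpres : ∃ e ∈ G'.edgeSet, x ∈ e ∧ φ e = γ := by
      by_contra hc
      exact hγx ⟨hγIcc, hc⟩
    obtain ⟨e, he, hxe, hγe⟩ := hpres
    obtain ⟨z, hz, rfl⟩ := mem_edge_exists he hxe
    by_cases hzfan : ∃ j < pm, ys j = z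
    · obtain ⟨j, hj, rfl⟩ := hzfan
      refine ⟨j, ?_, hj, hγe.symm⟩
      by_contra hj0
      have hj0' : j = 0 := by omega
      subst hj0'
      rw [hMF.1] at he
      rw [hG', SimpleGraph.edgeSet_deleteEdges] at he
      exact he.2 rfl
    · push_neg at hzfan
      exfalso
      apply hpmmax
      set ys' : ℕ → V := fun m => if m = pm then z else ys m with hys'
      have happ : ∀ m, ys' m = if m = pm then z else ys m := fun m => rfl
      refine ⟨ys', ?_, ?_, ?_, ?_⟩
      · rw [happ 0, if_neg (by omega : ¬ (0 : ℕ) = pm)]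
        exact hMF.1
      · intro m hm
        by_cases hmp : m = pm
        · rw [happ m, if_pos hmp]
          exact hG'le hz
        · rw [happ m, if_neg hmp]
          exact hMF.2.1 m (by omega)
      · intro m hm m' hm' heq
        rw [happ m, happ m'] at heq
        by_cases hmp : m = pm <;> by_cases hmp' : m' = pm
        · omega
        · rw [if_pos hmp, if_neg hmp'] at heq
          exact absurd heq.symm (hzfan m' (by omega))
        · rw [if_neg hmp, if_pos hmp'] at heq
          exact absurd heq (hzfan m (by omega))
        · rw [if_neg hmp, if_neg hmp'] at heq
          exact hMF.2.2.1 m (by omega) m' (by omega) heq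
      · intro m hm0 hm
        by_cases hmp : m = pm
        · subst hmp
          rw [happ pm, if_pos rfl]
          refine ⟨i, by omega, ?_⟩
          rw [happ i, if_neg (by omega : ¬ i = pm)]
          exact hγe ▸ hγ
        · rw [happ m, if_neg hmp]
          obtain ⟨jm, hjm, hcol⟩ := hMF.2.2.2 m hm0 (by omega)
          refine ⟨jm, hjm, ?_⟩
          rw [happ jm, if_neg (by omega : ¬ jm = pm)]
          exact hcol
  -- counting
  set M : ℕ → Finset ℕ := fun i => missF G' k φ (ys i) with hM
  have hdisj : ∀ i < pm, ∀ j < pm, i ≠ j → Disjoint (M i) (M j) := by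
    intro i hi j hj hij
    rw [Finset.disjoint_left]
    intro γ hγi hγj
    rcases Nat.lt_or_ge i j with hlt | hge
    · exact elem hxy hH hdx pm φ ys hprop hMF i j hlt hj γ (mem_missF.mp hγi)
        (mem_missF.mp hγj)
    · exact elem hxy hH hdx pm φ ys hprop hMF j i (by omega) hi γ (mem_missF.mp hγj)
        (mem_missF.mp hγi)
  set U : Finset ℕ := (Finset.range pm).biUnion M with hU
  have hcardU : U.card = ∑ i ∈ Finset.range pm, (M i).card := by
    rw [hU]
    exact Finset.card_biUnion (fun i hi j hj hij =>
      hdisj i (Finset.mem_range.mp hi) j (Finset.mem_range.mp hj) hij)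
  set fanC : Finset ℕ := (Finset.Ico 1 pm).image (fun j => φ s(x, ys j)) with hfanC
  have hUsub : U ⊆ fanC := by
    intro γ hγ
    rw [hU, Finset.mem_biUnion] at hγ
    obtain ⟨i, hi, hγi⟩ := hγ
    obtain ⟨j, hj1, hj2, hγj⟩ := hext γ i (Finset.mem_range.mp hi) (mem_missF.mp hγi)
    rw [hfanC, Finset.mem_image]
    exact ⟨j, Finset.mem_Ico.mpr ⟨hj1, hj2⟩, hγj.symm⟩
  have hcardfanC : fanC.card ≤ pm - 1 := by
    calc fanC.card ≤ (Finset.Ico 1 pm).card := Finset.card_image_le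
      _ = pm - 1 := Nat.card_Ico 1 pm
  -- degree identities on the fan
  have hdegysi : ∀ i, 1 ≤ i → i < pm → G'.degree (ys i) = H.degree (ys i) := by
    intro i h1 h2
    apply deg_del_other
    · exact fun hc => (hMF.2.1 i h2).ne hc.symm
    · intro hc
      have : ys i = ys 0 := by rw [hMF.1]; exact hc
      have := hMF.2.2.1 i h2 0 (by omega) this
      omega
  have hM0 : k + 1 ≤ H.degree y + (M 0).card := by
    simp only [hM]
    have h := missF_card G' k φ (ys 0)
    have hdeg0 : G'.degree (ys 0) = G'.degree y := by rw [hMF.1]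
    omega
  set lowF : Finset ℕ := (Finset.Ico 1 pm).filter (fun i => H.degree (ys i) < k) with hlowF
  set highF : Finset ℕ := (Finset.Ico 1 pm).filter (fun i => ¬ H.degree (ys i) < k)
    with hhighF
  have hsplit : lowF.card + highF.card = pm - 1 := by
    rw [hlowF, hhighF, Finset.card_filter_add_card_filter_not, Nat.card_Ico]
  have hlow1 : ∀ i ∈ lowF, 1 ≤ (M i).card := by
    intro i hi
    rw [hlowF, Finset.mem_filter, Finset.mem_Ico] at hi
    simp only [hM]
    have h := missF_card G' k φ (ys i)
    rw [hdegysi i hi.1.1 hi.1.2] at h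
    have := hi.2
    omega
  have hsum_lower : (M 0).card + lowF.card ≤ ∑ i ∈ Finset.range pm, (M i).card := by
    have hr : Finset.range pm = insert 0 (Finset.Ico 1 pm) := by
      ext m
      simp only [Finset.mem_range, Finset.mem_insert, Finset.mem_Ico]
      omega
    rw [hr, Finset.sum_insert (by simp)]
    have : lowF.card ≤ ∑ i ∈ Finset.Ico 1 pm, (M i).card := by
      calc lowF.card = ∑ i ∈ lowF, 1 := by simp
        _ ≤ ∑ i ∈ lowF, (M i).card := Finset.sum_le_sum hlow1
        _ ≤ ∑ i ∈ Finset.Ico 1 pm, (M i).card := by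
            apply Finset.sum_le_sum_of_subset
            rw [hlowF]
            exact Finset.filter_subset _ _
    omega
  have hkey : (M 0).card ≤ highF.card := by
    have h1 : ∑ i ∈ Finset.range pm, (M i).card ≤ pm - 1 := by
      rw [← hcardU]
      exact (Finset.card_le_card hUsub).trans hcardfanC
    omega
  -- map highF into the full-degree neighbors of x
  have hinj : highF.card ≤
      ((H.neighborFinset x).filter (fun z => z ≠ y ∧ H.degree z = k)).card := by
    apply Finset.card_le_card_of_injOn ys
    · intro i hi
      simp only [Finset.mem_coe, hhighF, Finset.mem_filter, Finset.mem_Ico] at hi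
      rw [Finset.mem_coe, Finset.mem_filter]
      refine ⟨(H.mem_neighborFinset x _).mpr (hMF.2.1 i hi.1.2), ?_, ?_⟩
      · intro hc
        have : ys i = ys 0 := by rw [hMF.1]; exact hc
        have := hMF.2.2.1 i hi.1.2 0 (by omega) this
        omega
      · have := hdeg (ys i)
        have := hi.2
        omega
    · intro i hi j hj hij
      have hi' : i ∈ highF := hi
      have hj' : j ∈ highF := hj
      rw [hhighF, Finset.mem_filter, Finset.mem_Ico] at hi' hj'
      exact hMF.2.2.1 i hi'.1.2 j hj'.1.2 hij
  omega

end HZ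


namespace HZ

open Classical

variable {V : Type*} [Fintype V]

open Classical in
lemma exists_crit {G : SimpleGraph V} (k : ℕ) :
    ∀ n (H : SimpleGraph V), H ≤ G → H.edgeFinset.card ≤ n → ¬ EdgeColorable H k →
    ∃ H', H' ≤ G ∧ ¬ EdgeColorable H' k ∧
      ∀ e ∈ H'.edgeSet, EdgeColorable (H'.deleteEdges {e}) k := by
  intro n
  induction n with
  | zero =>
    intro H hle hcard hH
    exfalso
    apply hH
    have hempty : ∀ e ∈ H.edgeSet, False := by
      intro e he
      have : e ∈ H.edgeFinset := SimpleGraph.mem_edgeFinset.mpr he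
      have h0 : H.edgeFinset.card = 0 := by omega
      rw [Finset.card_eq_zero] at h0
      rw [h0] at this
      exact absurd this (Finset.notMem_empty e)
    exact ⟨fun _ => 1, fun e he => (hempty e he).elim, fun e he => (hempty e he).elim⟩
  | succ n ih =>
    intro H hle hcard hH
    by_cases hc : ∀ e ∈ H.edgeSet, EdgeColorable (H.deleteEdges {e}) k
    · exact ⟨H, hle, hH, hc⟩
    · push_neg at hc
      obtain ⟨e, he, hne⟩ := hc
      have hEF : (H.deleteEdges {e}).edgeFinset = H.edgeFinset.erase e := by
        ext f
        simp only [SimpleGraph.mem_edgeFinset, SimpleGraph.edgeSet_deleteEdges,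
          Set.mem_diff, Set.mem_singleton_iff, Finset.mem_erase]
        tauto
      have hcard' : (H.deleteEdges {e}).edgeFinset.card ≤ n := by
        rw [hEF, Finset.card_erase_of_mem (SimpleGraph.mem_edgeFinset.mpr he)]
        omega
      exact ih (H.deleteEdges {e}) ((SimpleGraph.deleteEdges_le _).trans hle) hcard' hne

lemma cross_edge {G : SimpleGraph V} {W : Set V} {a b : V} (ha : a ∈ W) (hb : b ∉ W)
    (hr : G.Reachable a b) : ∃ c d, G.Adj c d ∧ c ∈ W ∧ d ∉ W := by
  obtain ⟨p⟩ := hr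
  have key : ∀ (u w : V) (p : G.Walk u w), u ∈ W → w ∉ W →
      ∃ c d, G.Adj c d ∧ c ∈ W ∧ d ∉ W := by
    intro u w p
    induction p with
    | nil => exact fun h h' => absurd h h'
    | @cons u' v' _ hadj q ih =>
      intro hu hw
      by_cases hv : v' ∈ W
      · exact ih hv hw
      · exact ⟨u', v', hadj, hu, hv⟩
  exact key a b p ha hb

end HZ


open HZ

open Classical in
theorem stmt_13 {V : Type*} [Fintype V] (G : SimpleGraph V) (hconn : G.Connected)
    (hclass2a : EdgeColorable G (G.maxDegree + 1))
    (hclass2b : ¬ EdgeColorable G G.maxDegree)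
    (hcore : ∀ v, (G.induce {v : V | G.degree v = G.maxDegree}).degree v ≤ 2)
    (hΔ : 4 ≤ G.maxDegree)
    (hsame : ∀ u v : V, G.degree u = G.maxDegree → G.degree v = G.maxDegree →
      {w : V | G.Adj u w ∧ G.degree w = G.maxDegree - 1} =
        {w : V | G.Adj v w ∧ G.degree w = G.maxDegree - 1}) :
    ∀ u x : V, G.degree u = G.maxDegree → G.degree x = G.maxDegree - 1 → G.Adj u x := by
  classical
  intro u x hu hx
  by_contra hadj
  set k := G.maxDegree with hk
  -- x has no neighbor of maximum degree
  have hnoΔ : ∀ z, G.Adj x z → G.degree z ≠ k := by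
    intro z hz hzk
    have hset := hsame z u hzk hu
    have hxmem : x ∈ {w : V | G.Adj z w ∧ G.degree w = G.maxDegree - 1} := ⟨hz.symm, hx⟩
    rw [hset] at hxmem
    exact hadj hxmem.1
  have hGdeg : ∀ v, G.degree v ≤ k := fun v => G.degree_le_maxDegree v
  -- a critical subgraph
  obtain ⟨H, hle, hH, hcrit⟩ := exists_crit k G.edgeFinset.card G le_rfl le_rfl hclass2b
  have hdegH : ∀ v, H.degree v ≤ k := fun v => (degree_mono hle v).trans (hGdeg v)
  have hsand : ∀ v, H.degree v = k → G.degree v = k := by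
    intro v hv
    have := degree_mono hle v
    have := hGdeg v
    omega
  -- weak adjacency: every H-covered vertex has a full H-neighbor
  have weakA : ∀ a b, H.Adj a b → ∃ z, H.Adj a z ∧ H.degree z = k := by
    intro a b hab
    have h := val hH hcrit hdegH hab
    have hcard : 0 < ((H.neighborFinset a).filter (fun z => z ≠ b ∧ H.degree z = k)).card := by
      have := hdegH b
      omega
    obtain ⟨z, hz⟩ := Finset.card_pos.mp hcard
    rw [Finset.mem_filter] at hz
    exact ⟨z, (H.mem_neighborFinset _ _).mp hz.1, hz.2.2⟩
  -- no full vertex has three distinct full neighbors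
  have hcore3 : ∀ z a b c : V, G.degree z = k → a ≠ b → a ≠ c → b ≠ c →
      G.Adj z a → G.Adj z b → G.Adj z c →
      G.degree a = k → G.degree b = k → G.degree c = k → False := by
    intro z a b c hzk hab hac hbc hza hzb hzc hak hbk hck
    have hzS : z ∈ {v : V | G.degree v = k} := hzk
    have hle2 := hcore ⟨z, hzS⟩
    have hmemS : ∀ w : V, G.degree w = k → w ∈ {v : V | G.degree v = k} := fun w hw => hw
    set f : V → ↥{v : V | G.degree v = k} := fun w => if h : w ∈ {v : V | G.degree v = k} then (⟨w, h⟩ : ↥{v : V | G.degree v = k}) else ⟨z, hzS⟩ with hf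
    have h3 : ({a, b, c} : Finset V).card ≤
        ((G.induce {v : V | G.degree v = k}).neighborFinset ⟨z, hzS⟩).card := by
      apply Finset.card_le_card_of_injOn f
      · intro w hw
        simp only [Finset.mem_coe, Finset.mem_insert, Finset.mem_singleton] at hw
        have hwS : w ∈ {v : V | G.degree v = k} ∧ G.Adj z w := by
          rcases hw with rfl | rfl | rfl
          · exact ⟨hmemS _ hak, hza⟩
          · exact ⟨hmemS _ hbk, hzb⟩
          · exact ⟨hmemS _ hck, hzc⟩
        rw [Finset.mem_coe, SimpleGraph.mem_neighborFinset]
        have : f w = ⟨w, hwS.1⟩ := by rw [hf]; simp [hwS.1]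
        rw [this]
        exact hwS.2
      · intro w1 hw1 w2 hw2 heq
        simp only [Finset.mem_coe, Finset.mem_insert, Finset.mem_singleton] at hw1 hw2
        have hw1S : w1 ∈ {v : V | G.degree v = k} := by
          rcases hw1 with rfl | rfl | rfl
          · exact hmemS _ hak
          · exact hmemS _ hbk
          · exact hmemS _ hck
        have hw2S : w2 ∈ {v : V | G.degree v = k} := by
          rcases hw2 with rfl | rfl | rfl
          · exact hmemS _ hak
          · exact hmemS _ hbk
          · exact hmemS _ hck
        have e1 : f w1 = ⟨w1, hw1S⟩ := by rw [hf]; simp [hw1S]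
        have e2 : f w2 = ⟨w2, hw2S⟩ := by rw [hf]; simp [hw2S]
        rw [e1, e2] at heq
        exact congrArg Subtype.val heq
    have hcard3 : ({a, b, c} : Finset V).card = 3 := by
      rw [Finset.card_insert_of_notMem (by simp [hab, hac]),
        Finset.card_insert_of_notMem (by simp [hbc]), Finset.card_singleton]
    rw [hcard3] at h3
    have : (G.induce {v : V | G.degree v = k}).degree ⟨z, hzS⟩ = ((G.induce {v : V | G.degree v = k}).neighborFinset ⟨z, hzS⟩).card := rfl
    omega
  -- every vertex meeting an H-edge has H-degree at least k - 1
  have degs : ∀ a b, H.Adj a b → k - 1 ≤ H.degree a := by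
    intro a b hab
    by_contra hlow
    push_neg at hlow
    obtain ⟨z, haz, hzk⟩ := weakA a b hab
    have h := val hH hcrit hdegH haz.symm
    have hcard3 : 2 < ((H.neighborFinset z).filter (fun w => w ≠ a ∧ H.degree w = k)).card := by
      have hk4 : 4 ≤ k := hΔ
      omega
    obtain ⟨z1, hz1, z2, hz2, z3, hz3, h12, h13, h23⟩ := Finset.two_lt_card.mp hcard3
    rw [Finset.mem_filter] at hz1 hz2 hz3
    exact hcore3 z z1 z2 z3 (hsand z hzk) h12 h13 h23
      (hle ((H.mem_neighborFinset _ _).mp hz1.1)) (hle ((H.mem_neighborFinset _ _).mp hz2.1))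
      (hle ((H.mem_neighborFinset _ _).mp hz3.1))
      (hsand _ hz1.2.2) (hsand _ hz2.2.2) (hsand _ hz3.2.2)
  -- H has all the edges of G
  have noextra : ∀ a b, G.Adj a b → H.Adj a b := by
    by_contra hc
    push_neg at hc
    obtain ⟨a, b, hab, hnab⟩ := hc
    set W : Set V := {v | 0 < H.degree v} with hW
    have hWne : ∃ w, w ∈ W := by
      by_contra hno
      push_neg at hno
      apply hH
      have hempty : ∀ e ∈ H.edgeSet, False := by
        intro e he
        induction e with
        | _ p q =>
          have hpq : H.Adj p q := he
          have hpos : 0 < H.degree p :=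
            Finset.card_pos.mpr ⟨q, (H.mem_neighborFinset p q).mpr hpq⟩
          exact hno p hpos
      exact ⟨fun _ => 1, fun e he => (hempty e he).elim, fun e he => (hempty e he).elim⟩
    obtain ⟨w0, hw0⟩ := hWne
    have hsubnbr : ∀ v, H.neighborFinset v ⊆ G.neighborFinset v := by
      intro v w hw
      rw [SimpleGraph.mem_neighborFinset] at hw ⊢
      exact hle hw
    have hv : ∃ v, 0 < H.degree v ∧ H.degree v < G.degree v := by
      by_cases haW : a ∈ W
      · refine ⟨a, haW, ?_⟩
        apply Finset.card_lt_card
        rw [Finset.ssubset_iff_of_subset (hsubnbr a)]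
        exact ⟨b, (G.mem_neighborFinset a b).mpr hab,
          fun hmem => hnab ((H.mem_neighborFinset a b).mp hmem)⟩
      · obtain ⟨c, d, hcd, hcW, hdW⟩ := cross_edge hw0 haW (hconn.preconnected w0 a)
        have hnHcd : ¬ H.Adj c d := by
          intro h
          exact hdW (Finset.card_pos.mpr ⟨c, (H.mem_neighborFinset d c).mpr h.symm⟩)
        refine ⟨c, hcW, ?_⟩
        apply Finset.card_lt_card
        rw [Finset.ssubset_iff_of_subset (hsubnbr c)]
        exact ⟨d, (G.mem_neighborFinset c d).mpr hcd,
          fun hmem => hnHcd ((H.mem_neighborFinset c d).mp hmem)⟩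
    obtain ⟨v, hv1, hv2⟩ := hv
    obtain ⟨w, hw⟩ := Finset.card_pos.mp hv1
    have hvw : H.Adj v w := (H.mem_neighborFinset v w).mp hw
    have hd1 : k - 1 ≤ H.degree v := degs v w hvw
    have hk4 : 4 ≤ k := hΔ
    have hGvle := hGdeg v
    have hd2 : H.degree v = k - 1 := by omega
    have hGv : G.degree v = k := by omega
    obtain ⟨z, hvz, hzk⟩ := weakA v w hvw
    have h := val hH hcrit hdegH hvz.symm
    have hcard2 : 1 < ((H.neighborFinset z).filter (fun w => w ≠ v ∧ H.degree w = k)).card := by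
      omega
    obtain ⟨z1, hz1, z2, hz2, h12⟩ := Finset.one_lt_card.mp hcard2
    rw [Finset.mem_filter] at hz1 hz2
    exact hcore3 z z1 z2 v (hsand z hzk) h12 hz1.2.1 hz2.2.1
      (hle ((H.mem_neighborFinset _ _).mp hz1.1)) (hle ((H.mem_neighborFinset _ _).mp hz2.1))
      (hle hvz.symm) (hsand _ hz1.2.2) (hsand _ hz2.2.2) hGv
  -- conclusion
  have hk4 : 4 ≤ k := hΔ
  have hxdeg : 0 < G.degree x := by
    rw [hx]
    omega
  obtain ⟨b, hb⟩ := Finset.card_pos.mp hxdeg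
  have hxb : G.Adj x b := (G.mem_neighborFinset x b).mp hb
  have hHxb : H.Adj x b := noextra x b hxb
  obtain ⟨z, hxz, hzk⟩ := weakA x b hHxb
  exact hnoΔ z (hle hxz) (hsand z hzk)
end

section
/- Let G be a graph, rs₁ ∈ E(G), and φ a proper edge Δ-coloring of G − rs₁ where Δ = Δ(G) and χ'(G) = Δ+1. If F = (r, rs₁, s₁, rs₂, s₂, …, rs_p, s_p) is a multifan with respect to rs₁ and φ, then the vertex set {r, s₁, …, s_p} is φ-elementary. -/
open SimpleGraph

-- Multifan lemma (elementarity): let `G` be a class-2 graph with maximum degree `Δ`,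
-- `rs₁ ∈ E(G)`, `φ` a proper edge `Δ`-coloring of `G − rs₁`, and
-- `F = (r, rs₁, s₁, …, rs_p, s_p)` a multifan with respect to `rs₁` and `φ`
-- (distinct vertices `s₁, …, s_p` adjacent to `r`, and for every `i ≥ 2` there is
-- `j < i` with `φ(rs_i)` missing at `s_j`).  Then `{r, s₁, …, s_p}` is `φ`-elementary.
namespace VizingAux

variable {V : Type*}

lemma mem_missing {G : SimpleGraph V} {k : ℕ} {c : Sym2 V → ℕ} {v : V} {γ : ℕ} :
    γ ∈ missingColors G k c v ↔ γ ∈ Finset.Icc 1 k ∧ ¬ ∃ e ∈ G.edgeSet, v ∈ e ∧ c e = γ :=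
  Iff.rfl

lemma not_present {G : SimpleGraph V} {k : ℕ} {c : Sym2 V → ℕ} {v : V} {γ : ℕ}
    (h : γ ∈ missingColors G k c v) {e : Sym2 V} (he : e ∈ G.edgeSet) (hv : v ∈ e) :
    c e ≠ γ := fun hc => h.2 ⟨e, he, hv, hc⟩

lemma missing_congr {G : SimpleGraph V} {k : ℕ} {c c' : Sym2 V → ℕ} {v : V}
    (h : ∀ e ∈ G.edgeSet, v ∈ e → c' e = c e) :
    missingColors G k c' v = missingColors G k c v := by
  ext γ
  simp only [mem_missing]
  constructor <;> rintro ⟨h1, h2⟩ <;>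
    refine ⟨h1, fun hex => ?_⟩ <;> obtain ⟨e, he, hv, hce⟩ := hex <;>
    refine h2 ⟨e, he, hv, ?_⟩
  · rw [h e he hv]; exact hce
  · rw [← h e he hv]; exact hce

open Classical in
lemma recolor_proper {G : SimpleGraph V} {k : ℕ} {c : Sym2 V → ℕ}
    (hc : IsProperEdgeColoring G k c) {a b : V} {α : ℕ}
    (hα : α ∈ Finset.Icc 1 k)
    (ha : α ∈ missingColors G k c a) (hb : α ∈ missingColors G k c b) :
    IsProperEdgeColoring G k (fun e => if e = s(a,b) then α else c e) := by
  constructor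
  · intro e he
    by_cases h : e = s(a,b)
    · simp only [if_pos h]; exact hα
    · simp only [if_neg h]; exact hc.1 e he
  · rintro e he g hg heg ⟨v, hve, hvg⟩
    by_cases h1 : e = s(a,b) <;> by_cases h2 : g = s(a,b)
    · exact absurd (h1.trans h2.symm) heg
    · subst h1
      simp only [if_pos rfl, if_neg h2]
      rw [Sym2.mem_iff] at hve
      intro hcg
      rcases hve with rfl | rfl
      · exact not_present ha hg hvg hcg.symm
      · exact not_present hb hg hvg hcg.symm
    · subst h2
      simp only [if_pos rfl, if_neg h1]
      rw [Sym2.mem_iff] at hvg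
      intro hcg
      rcases hvg with rfl | rfl
      · exact not_present ha he hve hcg
      · exact not_present hb he hve hcg
    · simp only [if_neg h1, if_neg h2]
      exact hc.2 e he g hg heg ⟨v, hve, hvg⟩

end VizingAux

namespace VizingAux
variable {V : Type*}

/-! ### Kempe chain swaps -/

def swColor (α β γ : ℕ) : ℕ := if γ = α then β else if γ = β then α else γ

lemma swColor_invol {α β : ℕ} (hne : α ≠ β) (γ : ℕ) : swColor α β (swColor α β γ) = γ := by
  unfold swColor
  by_cases h1 : γ = α
  · simp [h1, hne.symm, if_neg hne]
  · by_cases h2 : γ = β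
    · simp [h1, h2]
    · simp [h1, h2]

lemma swColor_eq_self {α β γ : ℕ} (h1 : γ ≠ α) (h2 : γ ≠ β) : swColor α β γ = γ := by
  simp [swColor, h1, h2]

lemma swColor_alpha {α β : ℕ} : swColor α β α = β := by simp [swColor]

lemma swColor_beta {α β : ℕ} (hne : α ≠ β) : swColor α β β = α := by
  simp [swColor, hne.symm]

lemma swColor_inj {α β : ℕ} (hne : α ≠ β) : Function.Injective (swColor α β) := by
  intro x y h
  have := congrArg (swColor α β) h
  rwa [swColor_invol hne, swColor_invol hne] at this

lemma swColor_mem {k α β γ : ℕ} (hα : α ∈ Finset.Icc 1 k) (hβ : β ∈ Finset.Icc 1 k)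
    (h : γ ∈ Finset.Icc 1 k) : swColor α β γ ∈ Finset.Icc 1 k := by
  simp only [Finset.mem_Icc] at *
  unfold swColor
  by_cases h1 : γ = α
  · simpa [h1]
  · by_cases h2 : γ = β <;> by_cases h3 : β = α <;> simp [h1, h2, h3, h, hα, hβ]

lemma swColor_mem_pair {α β γ : ℕ} (h : γ = α ∨ γ = β) :
    swColor α β γ = α ∨ swColor α β γ = β := by
  rcases h with rfl | rfl
  · rw [swColor_alpha]; exact Or.inr rfl
  · by_cases hab : γ = α
    · subst hab; rw [swColor_alpha]; exact Or.inr rfl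
    · rw [swColor_beta (fun h => hab h.symm)]; exact Or.inl rfl

lemma chain_edge_mem {G : SimpleGraph V} {c : Sym2 V → ℕ} {α β : ℕ} {e : Sym2 V}
    (h : e ∈ (chainGraph G c α β).edgeSet) : e ∈ G.edgeSet ∧ (c e = α ∨ c e = β) := by
  rw [chainGraph, edgeSet_fromEdgeSet] at h
  exact h.1

lemma mem_chain_edge {G : SimpleGraph V} {c : Sym2 V → ℕ} {α β : ℕ} {e : Sym2 V}
    (he : e ∈ G.edgeSet) (hce : c e = α ∨ c e = β) : e ∈ (chainGraph G c α β).edgeSet := by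
  rw [chainGraph, edgeSet_fromEdgeSet]
  exact ⟨⟨he, hce⟩, G.not_isDiag_of_mem_edgeSet he⟩

lemma chain_closure {G : SimpleGraph V} {c : Sym2 V → ℕ} {α β : ℕ} {K : Set V}
    (hK : ∀ ⦃a b⦄, (chainGraph G c α β).Adj a b → a ∈ K → b ∈ K)
    {e : Sym2 V} (he : e ∈ (chainGraph G c α β).edgeSet) {v : V} (hv : v ∈ e) (hvK : v ∈ K) :
    ∀ w ∈ e, w ∈ K := by
  induction e using Sym2.ind with
  | _ x y =>
    rw [Sym2.mem_iff] at hv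
    rw [SimpleGraph.mem_edgeSet] at he
    intro w hw
    rw [Sym2.mem_iff] at hw
    rcases hv with rfl | rfl <;> rcases hw with rfl | rfl
    · exact hvK
    · exact hK he hvK
    · exact hK he.symm hvK
    · exact hvK

open Classical in
noncomputable def swapCol (G : SimpleGraph V) (c : Sym2 V → ℕ) (α β : ℕ) (K : Set V) :
    Sym2 V → ℕ :=
  fun e => if e ∈ (chainGraph G c α β).edgeSet ∧ ∃ v ∈ e, v ∈ K then swColor α β (c e) else c e

section Swap

variable {G : SimpleGraph V} {k : ℕ} {c : Sym2 V → ℕ} {α β : ℕ} {K : Set V}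

lemma swapCol_of_swapped {e : Sym2 V} (h1 : e ∈ (chainGraph G c α β).edgeSet)
    (h2 : ∃ v ∈ e, v ∈ K) : swapCol G c α β K e = swColor α β (c e) := by
  rw [swapCol, if_pos ⟨h1, h2⟩]

lemma swapCol_of_not_swapped {e : Sym2 V}
    (h : ¬ (e ∈ (chainGraph G c α β).edgeSet ∧ ∃ v ∈ e, v ∈ K)) :
    swapCol G c α β K e = c e := by
  rw [swapCol, if_neg h]

lemma swapCol_not_mem (hK : ∀ ⦃a b⦄, (chainGraph G c α β).Adj a b → a ∈ K → b ∈ K)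
    {v : V} (hv : v ∉ K) : ∀ e, v ∈ e → swapCol G c α β K e = c e := by
  intro e hve
  refine swapCol_of_not_swapped ?_
  rintro ⟨hch, w, hwe, hwK⟩
  exact hv (chain_closure hK hch hwe hwK v hve)

lemma swapCol_swapped_of_mem (hK : ∀ ⦃a b⦄, (chainGraph G c α β).Adj a b → a ∈ K → b ∈ K)
    {v : V} (hv : v ∈ K) {e : Sym2 V} (he : e ∈ G.edgeSet) (hve : v ∈ e)
    (hce : c e = α ∨ c e = β) : swapCol G c α β K e = swColor α β (c e) :=
  swapCol_of_swapped (mem_chain_edge he hce) ⟨v, hve, hv⟩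

lemma swapCol_proper (hc : IsProperEdgeColoring G k c) (hα : α ∈ Finset.Icc 1 k)
    (hβ : β ∈ Finset.Icc 1 k)
    (hK : ∀ ⦃a b⦄, (chainGraph G c α β).Adj a b → a ∈ K → b ∈ K) :
    IsProperEdgeColoring G k (swapCol G c α β K) := by
  have hval : ∀ e ∈ G.edgeSet, swapCol G c α β K e = swColor α β (c e) ∨
      (swapCol G c α β K e = c e ∧ ¬ (c e ∈ ({α, β} : Set ℕ) ∧ ∃ v ∈ e, v ∈ K)) := by
    intro e he
    by_cases h : e ∈ (chainGraph G c α β).edgeSet ∧ ∃ v ∈ e, v ∈ K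
    · exact Or.inl (swapCol_of_swapped h.1 h.2)
    · refine Or.inr ⟨swapCol_of_not_swapped h, fun hcon => h ⟨mem_chain_edge he ?_, hcon.2⟩⟩
      simpa using hcon.1
  constructor
  · intro e he
    rcases hval e he with h | h
    · rw [h]; exact swColor_mem hα hβ (hc.1 e he)
    · rw [h.1]; exact hc.1 e he
  · rintro e he g hg heg ⟨v, hve, hvg⟩
    have hcc := hc.2 e he g hg heg ⟨v, hve, hvg⟩
    by_cases h1 : e ∈ (chainGraph G c α β).edgeSet ∧ ∃ w ∈ e, w ∈ K <;>
      by_cases h2 : g ∈ (chainGraph G c α β).edgeSet ∧ ∃ w ∈ g, w ∈ K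
    · rw [swapCol_of_swapped h1.1 h1.2, swapCol_of_swapped h2.1 h2.2]
      by_cases hab : α = β
      · subst hab
        have h3 := (chain_edge_mem h1.1).2
        have h4 := (chain_edge_mem h2.1).2
        simp only [or_self] at h3 h4
        simp [swColor, h3, h4] at hcc ⊢
      · exact fun hcon => hcc (swColor_inj hab hcon)
    · obtain ⟨w, hwe, hwK⟩ := h1.2
      have hvK : v ∈ K := chain_closure hK h1.1 hwe hwK v hve
      rw [swapCol_of_swapped h1.1 ⟨w, hwe, hwK⟩, swapCol_of_not_swapped h2]
      intro hcon
      have hcg : c g = α ∨ c g = β := by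
        rcases swColor_mem_pair (chain_edge_mem h1.1).2 with h | h <;> rw [hcon] at h
        · exact Or.inl h
        · exact Or.inr h
      exact h2 ⟨mem_chain_edge hg hcg, v, hvg, hvK⟩
    · obtain ⟨w, hwe, hwK⟩ := h2.2
      have hvK : v ∈ K := chain_closure hK h2.1 hwe hwK v hvg
      rw [swapCol_of_swapped h2.1 ⟨w, hwe, hwK⟩, swapCol_of_not_swapped h1]
      intro hcon
      have hce : c e = α ∨ c e = β := by
        rcases swColor_mem_pair (chain_edge_mem h2.1).2 with h | h <;> rw [← hcon] at h
        · exact Or.inl h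
        · exact Or.inr h
      exact h1 ⟨mem_chain_edge he hce, v, hve, hvK⟩
    · rw [swapCol_of_not_swapped h1, swapCol_of_not_swapped h2]; exact hcc

end Swap
end VizingAux
namespace VizingAux
variable {V : Type*}

section Swap2
variable {G : SimpleGraph V} {k : ℕ} {c : Sym2 V → ℕ} {α β : ℕ} {K : Set V}

lemma swapCol_present (hne : α ≠ β)
    (hK : ∀ ⦃a b⦄, (chainGraph G c α β).Adj a b → a ∈ K → b ∈ K)
    {v : V} (hv : v ∈ K) (δ : ℕ) :
    (∃ e ∈ G.edgeSet, v ∈ e ∧ swapCol G c α β K e = δ) ↔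
      (∃ e ∈ G.edgeSet, v ∈ e ∧ c e = swColor α β δ) := by
  constructor
  · rintro ⟨e, he, hve, hsw⟩
    refine ⟨e, he, hve, ?_⟩
    by_cases h : e ∈ (chainGraph G c α β).edgeSet ∧ ∃ w ∈ e, w ∈ K
    · rw [swapCol_of_swapped h.1 h.2] at hsw
      rw [← hsw, swColor_invol hne]
    · rw [swapCol_of_not_swapped h] at hsw
      subst hsw
      rw [swColor_eq_self ?_ ?_] <;> intro hcon
      · exact h ⟨mem_chain_edge he (Or.inl hcon), v, hve, hv⟩
      · exact h ⟨mem_chain_edge he (Or.inr hcon), v, hve, hv⟩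
  · rintro ⟨e, he, hve, hce⟩
    refine ⟨e, he, hve, ?_⟩
    by_cases h : δ = α ∨ δ = β
    · have hcc : c e = α ∨ c e = β := by
        rw [hce]
        exact swColor_mem_pair h
      rw [swapCol_swapped_of_mem hK hv he hve hcc, hce, swColor_invol hne]
    · push_neg at h
      have hδ : swColor α β δ = δ := swColor_eq_self h.1 h.2
      rw [hδ] at hce
      rw [swapCol_of_not_swapped, hce]
      rintro ⟨hch, -⟩
      rcases (chain_edge_mem hch).2 with hh | hh <;> rw [hce] at hh
      · exact h.1 hh
      · exact h.2 hh

lemma swapCol_missing_not_mem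
    (hK : ∀ ⦃a b⦄, (chainGraph G c α β).Adj a b → a ∈ K → b ∈ K)
    {v : V} (hv : v ∉ K) :
    missingColors G k (swapCol G c α β K) v = missingColors G k c v :=
  missing_congr (fun e _ hve => swapCol_not_mem hK hv e hve)

lemma swapCol_missing_mem (hα : α ∈ Finset.Icc 1 k) (hβ : β ∈ Finset.Icc 1 k) (hne : α ≠ β)
    (hK : ∀ ⦃a b⦄, (chainGraph G c α β).Adj a b → a ∈ K → b ∈ K)
    {v : V} (hv : v ∈ K) {δ : ℕ} :
    δ ∈ missingColors G k (swapCol G c α β K) v ↔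
      swColor α β δ ∈ missingColors G k c v := by
  simp only [mem_missing]
  rw [swapCol_present hne hK hv]
  constructor <;> rintro ⟨h1, h2⟩ <;> refine ⟨?_, h2⟩
  · exact swColor_mem hα hβ h1
  · have := swColor_mem hα hβ h1
    rwa [swColor_invol hne] at this

/-- bound on the number of neighbours in the chain graph -/
lemma chain_nbr_le_two (hc : IsProperEdgeColoring G k c) (v : V) :
    ((chainGraph G c α β).neighborSet v).ncard ≤ 2 := by
  have hmaps : ∀ w ∈ (chainGraph G c α β).neighborSet v,
      c s(v, w) ∈ ({α, β} : Set ℕ) := by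
    intro w hw
    have := (chain_edge_mem ((chainGraph G c α β).mem_edgeSet.2 hw)).2
    simpa using this
  have hinj : Set.InjOn (fun w => c s(v, w)) ((chainGraph G c α β).neighborSet v) := by
    intro x hx y hy hxy
    by_contra hne
    have hex : s(v, x) ∈ G.edgeSet := (chain_edge_mem ((chainGraph G c α β).mem_edgeSet.2 hx)).1
    have hey : s(v, y) ∈ G.edgeSet := (chain_edge_mem ((chainGraph G c α β).mem_edgeSet.2 hy)).1
    have hnee : s(v, x) ≠ s(v, y) := by
      intro hcon
      rw [Sym2.eq_iff] at hcon
      rcases hcon with ⟨-, h⟩ | ⟨h1, h2⟩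
      · exact hne h
      · exact hne (h2.trans h1)
    exact hc.2 _ hex _ hey hnee ⟨v, by simp, by simp⟩ hxy
  calc ((chainGraph G c α β).neighborSet v).ncard
      ≤ ({α, β} : Set ℕ).ncard :=
        Set.ncard_le_ncard_of_injOn _ hmaps hinj (Set.toFinite _)
    _ ≤ 2 := by
        refine le_trans (Set.ncard_insert_le _ _) ?_
        simp [Set.ncard_singleton]

lemma chain_nbr_le_one (hc : IsProperEdgeColoring G k c) {v : V} {δ : ℕ}
    (hδ : δ = α ∨ δ = β) (hmiss : δ ∈ missingColors G k c v) :
    ((chainGraph G c α β).neighborSet v).ncard ≤ 1 := by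
  set other := if δ = α then β else α with hother
  have hmaps : ∀ w ∈ (chainGraph G c α β).neighborSet v,
      c s(v, w) ∈ ({other} : Set ℕ) := by
    intro w hw
    have hmem := (chain_edge_mem ((chainGraph G c α β).mem_edgeSet.2 hw)).1
    have hcol := (chain_edge_mem ((chainGraph G c α β).mem_edgeSet.2 hw)).2
    have hnd : c s(v, w) ≠ δ := not_present hmiss hmem (by simp)
    simp only [Set.mem_singleton_iff, hother]
    rcases hδ with h | h
    · rw [if_pos h]
      rcases hcol with h2 | h2
      · exact absurd (h2.trans h.symm) hnd
      · exact h2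
    · by_cases hab : δ = α
      · rw [if_pos hab]
        rcases hcol with h2 | h2
        · exact absurd (h2.trans hab.symm) hnd
        · exact h2
      · rw [if_neg hab]
        rcases hcol with h2 | h2
        · exact h2
        · exact absurd (h2.trans h.symm) hnd
  have hinj : Set.InjOn (fun w => c s(v, w)) ((chainGraph G c α β).neighborSet v) := by
    intro x hx y hy hxy
    by_contra hne
    have hex : s(v, x) ∈ G.edgeSet := (chain_edge_mem ((chainGraph G c α β).mem_edgeSet.2 hx)).1
    have hey : s(v, y) ∈ G.edgeSet := (chain_edge_mem ((chainGraph G c α β).mem_edgeSet.2 hy)).1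
    have hnee : s(v, x) ≠ s(v, y) := by
      intro hcon
      rw [Sym2.eq_iff] at hcon
      rcases hcon with ⟨-, h⟩ | ⟨h1, h2⟩
      · exact hne h
      · exact hne (h2.trans h1)
    exact hc.2 _ hex _ hey hnee ⟨v, by simp, by simp⟩ hxy
  calc ((chainGraph G c α β).neighborSet v).ncard
      ≤ ({other} : Set ℕ).ncard :=
        Set.ncard_le_ncard_of_injOn _ hmaps hinj (Set.toFinite _)
    _ ≤ 1 := le_of_eq (Set.ncard_singleton _)

end Swap2
end VizingAux
namespace VizingAux
open SimpleGraph
variable {V : Type*}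

lemma connected_sdiff_of_not_bridge {G : SimpleGraph V} (hG : G.Connected) {e : Sym2 V}
    (he : e ∈ G.edgeSet) (hb : ¬ G.IsBridge e) : (G \ fromEdgeSet {e}).Connected := by
  induction e using Sym2.ind with
  | _ u v =>
    rw [isBridge_iff] at hb
    push_neg at hb
    have hadj : G.Adj u v := G.mem_edgeSet.1 he
    have hruv : (G \ fromEdgeSet {s(u, v)}).Reachable u v := hb
    rw [connected_iff]
    refine ⟨?_, hG.nonempty⟩
    intro a b
    obtain ⟨w⟩ := hG.preconnected a b
    induction w with
    | nil => exact Reachable.refl _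
    | @cons x y z h q ih =>
      refine Reachable.trans ?_ ih
      by_cases hxy : s(x, y) = s(u, v)
      · rw [Sym2.eq_iff] at hxy
        rcases hxy with ⟨rfl, rfl⟩ | ⟨rfl, rfl⟩
        · exact hruv
        · exact hruv.symm
      · refine Adj.reachable ?_
        rw [sdiff_adj, fromEdgeSet_adj]
        exact ⟨h, fun hcon => hxy hcon.1⟩

lemma card_le_ncard_edges_add_one :
    ∀ (n : ℕ) {W : Type*} [Fintype W] (G : SimpleGraph W),
      G.edgeSet.ncard ≤ n → G.Connected → Fintype.card W ≤ G.edgeSet.ncard + 1 := by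
  intro n
  induction n with
  | zero =>
    intro W _ G hn hG
    by_cases hac : G.IsAcyclic
    · classical
      letI : Fintype G.edgeSet := G.edgeSet.toFinite.fintype
      have := IsTree.card_edgeFinset ⟨hG, hac⟩
      rw [Set.ncard_eq_toFinset_card' G.edgeSet]
      have hEF : G.edgeSet.toFinset = G.edgeFinset := rfl
      rw [hEF]
      omega
    · exfalso
      obtain ⟨e, he, -⟩ : ∃ e ∈ G.edgeSet, ¬ G.IsBridge e := by
        by_contra h
        push_neg at h
        exact hac (isAcyclic_iff_forall_edge_isBridge.2 h)
      have : G.edgeSet.ncard = 0 := le_antisymm hn (Nat.zero_le _)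
      rw [Set.ncard_eq_zero (G.edgeSet.toFinite)] at this
      rw [this] at he
      exact he
  | succ n ih =>
    intro W _ G hn hG
    by_cases hac : G.IsAcyclic
    · classical
      letI : Fintype G.edgeSet := G.edgeSet.toFinite.fintype
      have := IsTree.card_edgeFinset ⟨hG, hac⟩
      rw [Set.ncard_eq_toFinset_card' G.edgeSet]
      have hEF : G.edgeSet.toFinset = G.edgeFinset := rfl
      rw [hEF]
      omega
    · obtain ⟨e, he, hbe⟩ : ∃ e ∈ G.edgeSet, ¬ G.IsBridge e := by
        by_contra h
        push_neg at h
        exact hac (isAcyclic_iff_forall_edge_isBridge.2 h)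
      have hG₂ : (G \ fromEdgeSet {e}).Connected := connected_sdiff_of_not_bridge hG he hbe
      have hE : (G \ fromEdgeSet {e}).edgeSet = G.edgeSet \ {e} := by
        rw [edgeSet_sdiff, edgeSet_fromEdgeSet, edgeSet_sdiff_sdiff_isDiag]
      have hpos : 1 ≤ G.edgeSet.ncard := by
        rw [Nat.one_le_iff_ne_zero]
        intro hcon
        rw [Set.ncard_eq_zero (G.edgeSet.toFinite)] at hcon
        rw [hcon] at he
        exact he
      have hcard : (G \ fromEdgeSet {e}).edgeSet.ncard = G.edgeSet.ncard - 1 := by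
        rw [hE]
        exact Set.ncard_diff_singleton_of_mem he
      have := ih (G \ fromEdgeSet {e}) (by omega) hG₂
      omega

lemma reachable_induce {H : SimpleGraph V} {K : Set V}
    (hclo : ∀ ⦃a b⦄, H.Adj a b → a ∈ K → b ∈ K) :
    ∀ {a b : V} (_ : H.Walk a b) (ha : a ∈ K) (hb : b ∈ K),
      (H.induce K).Reachable ⟨a, ha⟩ ⟨b, hb⟩ := by
  intro a b w
  induction w with
  | nil => intro ha hb; exact Reachable.refl _
  | @cons x y z h q ih =>
    intro ha hb
    have hy : y ∈ K := hclo h ha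
    have hadj : (H.induce K).Adj ⟨x, ha⟩ ⟨y, hy⟩ := h
    exact hadj.reachable.trans (ih hy hb)

lemma three_endpoints {W : Type*} [Fintype W] (H : SimpleGraph W) {x y z : W}
    (hxy : x ≠ y) (hxz : x ≠ z) (hyz : y ≠ z)
    (rxy : H.Reachable x y) (rxz : H.Reachable x z)
    (h2 : ∀ v, (H.neighborSet v).ncard ≤ 2)
    (h1x : (H.neighborSet x).ncard ≤ 1) (h1y : (H.neighborSet y).ncard ≤ 1)
    (h1z : (H.neighborSet z).ncard ≤ 1) : False := by
  classical
  set K : Set W := {v | H.Reachable x v} with hKdef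
  have hclo : ∀ ⦃a b⦄, H.Adj a b → a ∈ K → b ∈ K := fun a b hab ha => ha.trans hab.reachable
  have hx : x ∈ K := Reachable.refl x
  have hy : y ∈ K := rxy
  have hz : z ∈ K := rxz
  set H' := H.induce K with hH'
  have hconn : H'.Connected := by
    rw [connected_iff]
    refine ⟨?_, ⟨⟨x, hx⟩⟩⟩
    rintro ⟨a, ha⟩ ⟨b, hb⟩
    obtain ⟨w⟩ := (ha : H.Reachable x a).symm.trans (hb : H.Reachable x b)
    exact reachable_induce hclo w ha hb
  -- degree bounds in the induced graph
  have hdegle : ∀ v : ↥K, H'.degree v ≤ (H.neighborSet v.1).ncard := by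
    intro v
    rw [← card_neighborFinset_eq_degree]
    rw [Set.ncard_eq_toFinset_card' (H.neighborSet v.1)]
    refine Finset.card_le_card_of_injOn (fun u => u.1) ?_ ?_
    · intro u hu
      rw [Finset.mem_coe, mem_neighborFinset] at hu
      rw [Finset.mem_coe, Set.mem_toFinset]
      exact hu
    · intro u _ w _ huw
      exact Subtype.ext huw
  have hb2 : ∀ v : ↥K, H'.degree v ≤ 2 := fun v => le_trans (hdegle v) (h2 v.1)
  -- handshake
  have hhs : ∑ v : ↥K, H'.degree v = 2 * H'.edgeFinset.card :=
    H'.sum_degrees_eq_twice_card_edges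
  have hconnb : Fintype.card ↥K ≤ H'.edgeSet.ncard + 1 :=
    card_le_ncard_edges_add_one (H'.edgeSet.ncard) H' le_rfl hconn
  have hEcard : H'.edgeSet.ncard = H'.edgeFinset.card := Set.ncard_eq_toFinset_card' _
  -- the three special vertices
  set T : Finset ↥K := {⟨x, hx⟩, ⟨y, hy⟩, ⟨z, hz⟩} with hT
  have hTcard : T.card = 3 := by
    rw [hT]
    rw [Finset.card_insert_of_notMem, Finset.card_insert_of_notMem, Finset.card_singleton]
    · simp [Subtype.ext_iff, hyz]
    · simp [Subtype.ext_iff, hxy, hxz]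
  have hTsum : ∑ v ∈ T, H'.degree v ≤ 3 := by
    refine le_trans (Finset.sum_le_card_nsmul T _ 1 ?_) (by rw [hTcard]; simp)
    intro v hv
    rw [hT] at hv
    simp only [Finset.mem_insert, Finset.mem_singleton] at hv
    rcases hv with rfl | rfl | rfl
    · exact le_trans (hdegle _) h1x
    · exact le_trans (hdegle _) h1y
    · exact le_trans (hdegle _) h1z
  have hTcsum : ∑ v ∈ Finset.univ \ T, H'.degree v ≤ (Fintype.card ↥K - 3) * 2 := by
    refine le_trans (Finset.sum_le_card_nsmul _ _ 2 (fun v _ => hb2 v)) ?_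
    rw [Finset.card_sdiff_of_subset (Finset.subset_univ T), hTcard, Finset.card_univ]
    simp [mul_comm]
  have hsplit : ∑ v ∈ Finset.univ \ T, H'.degree v + ∑ v ∈ T, H'.degree v
      = ∑ v : ↥K, H'.degree v := Finset.sum_sdiff (Finset.subset_univ T)
  have hKge : 3 ≤ Fintype.card ↥K := by
    rw [← hTcard, ← Finset.card_univ]
    exact Finset.card_le_card (Finset.subset_univ T)
  omega

end VizingAux
namespace VizingAux
open SimpleGraph

/-- ambient data for the multifan argument -/
structure Setting (V : Type*) [Fintype V] where
  G : SimpleGraph V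
  k : ℕ
  r : V
  p : ℕ
  hp : 0 < p
  f : Fin p → V
  hinj : Function.Injective f
  hr : ∀ i, f i ≠ r
  hadj : ∀ i, G.Adj r (f i)
  hk : ({w | G.Adj r w} : Set V).ncard ≤ k

variable {V : Type*} [Fintype V]

def Setting.z (S : Setting V) : Fin S.p := ⟨0, S.hp⟩

def Setting.G' (S : Setting V) : SimpleGraph V := S.G.deleteEdges {s(S.r, S.f S.z)}

namespace Setting

variable (S : Setting V)

lemma edge_mem (i : Fin S.p) : s(S.r, S.f i) ∈ S.G.edgeSet := S.hadj i

lemma edge_ne {i j : Fin S.p} (h : i ≠ j) : s(S.r, S.f i) ≠ s(S.r, S.f j) := by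
  intro hcon
  rw [Sym2.eq_iff] at hcon
  rcases hcon with ⟨-, h2⟩ | ⟨h1, -⟩
  · exact h (S.hinj h2)
  · exact S.hr j h1.symm

lemma edge_mem' {i : Fin S.p} (h : i ≠ S.z) : s(S.r, S.f i) ∈ S.G'.edgeSet := by
  rw [Setting.G', edgeSet_deleteEdges]
  exact ⟨S.edge_mem i, by simpa using S.edge_ne h⟩

lemma edgeG'_sub : S.G'.edgeSet ⊆ S.G.edgeSet := by
  rw [Setting.G', edgeSet_deleteEdges]
  exact Set.diff_subset

lemma f_not_mem_edge {i j : Fin S.p} (h : j ≠ i) : S.f j ∉ s(S.r, S.f i) := by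
  rw [Sym2.mem_iff]
  rintro (h1 | h1)
  · exact S.hr j h1
  · exact h (S.hinj h1)

/-- coloring the removed edge, when a color is missing at both `r` and `f z` -/
lemma colorable_of_missing_z {c : Sym2 V → ℕ} (hc : IsProperEdgeColoring S.G' S.k c)
    {α : ℕ} (hαr : α ∈ missingColors S.G' S.k c S.r)
    (hαz : α ∈ missingColors S.G' S.k c (S.f S.z)) : EdgeColorable S.G S.k := by
  classical
  refine ⟨fun e => if e = s(S.r, S.f S.z) then α else c e, ?_, ?_⟩
  · intro e he
    by_cases h : e = s(S.r, S.f S.z)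
    · simp only [if_pos h]; exact hαr.1
    · simp only [if_neg h]
      refine hc.1 e ?_
      rw [Setting.G', edgeSet_deleteEdges]
      exact ⟨he, by simpa using h⟩
  · rintro e he g hg heg ⟨v, hve, hvg⟩
    have hmem : ∀ e' ∈ S.G.edgeSet, e' ≠ s(S.r, S.f S.z) → e' ∈ S.G'.edgeSet := by
      intro e' h1 h2
      rw [Setting.G', edgeSet_deleteEdges]
      exact ⟨h1, by simpa using h2⟩
    by_cases h1 : e = s(S.r, S.f S.z) <;> by_cases h2 : g = s(S.r, S.f S.z)
    · exact absurd (h1.trans h2.symm) heg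
    · subst h1
      simp only [if_pos rfl, if_neg h2]
      rw [Sym2.mem_iff] at hve
      intro hcon
      rcases hve with rfl | rfl
      · exact not_present hαr (hmem g hg h2) hvg hcon.symm
      · exact not_present hαz (hmem g hg h2) hvg hcon.symm
    · subst h2
      simp only [if_pos rfl, if_neg h1]
      rw [Sym2.mem_iff] at hvg
      intro hcon
      rcases hvg with rfl | rfl
      · exact not_present hαr (hmem e he h1) hve hcon
      · exact not_present hαz (hmem e he h1) hve hcon
    · simp only [if_neg h1, if_neg h2]
      exact hc.2 e (hmem e he h1) g (hmem g hg h2) heg ⟨v, hve, hvg⟩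

end Setting

/-- a descending chain in the multifan, ending at index `z` -/
inductive FanChain (S : Setting V) (c : Sym2 V → ℕ) : List (Fin S.p) → Prop
  | base : FanChain S c [S.z]
  | cons {i j : Fin S.p} {l : List (Fin S.p)} (hij : (j : ℕ) < (i : ℕ))
      (hm : c s(S.r, S.f i) ∈ missingColors S.G' S.k c (S.f j))
      (ht : FanChain S c (j :: l)) : FanChain S c (i :: j :: l)

namespace Setting
variable (S : Setting V)

lemma fanchain_head_lt {c : Sym2 V → ℕ} :
    ∀ {i : Fin S.p} {l : List (Fin S.p)}, FanChain S c (i :: l) →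
      ∀ x ∈ l, (x : ℕ) < (i : ℕ) := by
  intro i l
  induction l generalizing i with
  | nil => intro _ x hx; simp at hx
  | cons j l ih =>
    intro h x hx
    cases h with
    | cons hij hm ht =>
      rcases List.mem_cons.1 hx with rfl | hx'
      · exact hij
      · exact lt_trans (ih ht x hx') hij

lemma fanchain_find {c : Sym2 V → ℕ} (Q : Fin S.p → Prop) :
    ∀ {m : List (Fin S.p)}, FanChain S c m → (∃ y ∈ m, Q y) →
      ∃ x l', FanChain S c (x :: l') ∧ Q x ∧ ∀ y ∈ l', ¬ Q y := by
  intro m h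
  induction h with
  | base =>
    rintro ⟨y, hy, hQ⟩
    rw [List.mem_singleton] at hy
    subst hy
    exact ⟨S.z, [], FanChain.base, hQ, by simp⟩
  | @cons i j l hij hm ht ih =>
    intro hex
    by_cases h' : ∃ y ∈ j :: l, Q y
    · exact ih h'
    · have hQi : Q i := by
        obtain ⟨y, hy, hQ⟩ := hex
        rcases List.mem_cons.1 hy with rfl | hy'
        · exact hQ
        · exact absurd ⟨y, hy', hQ⟩ h'
      exact ⟨i, j :: l, FanChain.cons hij hm ht, hQi, fun y hy hQ => h' ⟨y, hy, hQ⟩⟩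

/-- "shifting" a fan chain: if a color is missing at `r` and at the head of a chain,
then `G` is `k`-edge-colorable. -/
lemma shift : ∀ (l : List (Fin S.p)) (c : Sym2 V → ℕ),
    IsProperEdgeColoring S.G' S.k c → ∀ (i : Fin S.p), FanChain S c (i :: l) →
    ∀ α, α ∈ missingColors S.G' S.k c S.r → α ∈ missingColors S.G' S.k c (S.f i) →
    EdgeColorable S.G S.k := by
  classical
  intro l
  induction l with
  | nil =>
    intro c hc i h α hαr hαi
    cases h with
    | base => exact S.colorable_of_missing_z hc hαr hαi
  | cons j l ih =>
    intro c hc i h α hαr hαi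
    cases h with
    | cons hij hm ht =>
      have hiz : i ≠ S.z := by
        intro hcon
        rw [hcon] at hij
        simp [Setting.z] at hij
      have hedge : s(S.r, S.f i) ∈ S.G'.edgeSet := S.edge_mem' hiz
      set γ := c s(S.r, S.f i) with hγ
      set c₁ : Sym2 V → ℕ := fun e => if e = s(S.r, S.f i) then α else c e with hc₁def
      have hc₁ : IsProperEdgeColoring S.G' S.k c₁ := recolor_proper hc hαr.1 hαr hαi
      have hαγ : γ ≠ α := not_present hαr hedge (by simp)
      have hγr : γ ∈ missingColors S.G' S.k c₁ S.r := by
        refine ⟨hc.1 _ hedge, ?_⟩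
        rintro ⟨e, he, hre, hce⟩
        by_cases h : e = s(S.r, S.f i)
        · rw [hc₁def] at hce
          simp only [h, if_pos rfl] at hce
          exact hαγ hce.symm
        · rw [hc₁def] at hce
          simp only [if_neg h] at hce
          exact hc.2 e he _ hedge h ⟨S.r, hre, by simp⟩ hce
      have hmisseq : ∀ (x : Fin S.p), x ≠ i →
          missingColors S.G' S.k c₁ (S.f x) = missingColors S.G' S.k c (S.f x) := by
        intro x hx
        refine missing_congr ?_
        intro e he hfe
        rw [hc₁def]
        refine if_neg ?_
        intro hcon
        subst hcon
        exact S.f_not_mem_edge hx hfe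
      have hγj : γ ∈ missingColors S.G' S.k c₁ (S.f j) := by
        rw [hmisseq j (by intro hcon; rw [hcon] at hij; omega)]
        exact hm
      have ht₁ : FanChain S c₁ (j :: l) := by
        have hlt : ∀ x ∈ j :: l, (x : ℕ) < (i : ℕ) := by
          intro x hx
          rcases List.mem_cons.1 hx with rfl | hx'
          · exact hij
          · exact lt_trans (S.fanchain_head_lt ht x hx') hij
        clear hγj hγr hm
        -- congruence for the tail chain
        have main : ∀ (m : List (Fin S.p)), FanChain S c m →
            (∀ x ∈ m, (x : ℕ) < (i : ℕ)) → FanChain S c₁ m := by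
          intro m hch
          induction hch with
          | base => intro _; exact FanChain.base
          | @cons a b l' hab hm' ht' ih' =>
            intro hbnd
            refine FanChain.cons hab ?_ (ih' (fun x hx => hbnd x (List.mem_cons_of_mem _ hx)))
            have ha : a ≠ i := by
              intro hcon
              have := hbnd a (List.mem_cons_self)
              omega
            have hb : b ≠ i := by
              intro hcon
              have := hbnd b (List.mem_cons_of_mem _ (List.mem_cons_self))
              omega
            have hcedge : c₁ s(S.r, S.f a) = c s(S.r, S.f a) := by
              rw [hc₁def]
              exact if_neg (S.edge_ne ha)
            rw [hcedge, hmisseq b hb]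
            exact hm'
        exact main (j :: l) ht hlt
      exact ih c₁ hc₁ j ht₁ γ hγr hγj

end Setting
end VizingAux
namespace VizingAux
open SimpleGraph

variable {V : Type*} [Fintype V]

namespace Setting
variable (S : Setting V)

/-- survival of a fan chain under a Kempe swap away from `r` -/
lemma fanchain_swap {c : Sym2 V → ℕ} (hc : IsProperEdgeColoring S.G' S.k c) {α β : ℕ}
    (hβr : β ∈ missingColors S.G' S.k c S.r) (hα : α ∈ Finset.Icc 1 S.k) (hαβ : α ≠ β)
    {K : Set V} (hK : ∀ ⦃a b⦄, (chainGraph S.G' c α β).Adj a b → a ∈ K → b ∈ K)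
    (hrK : S.r ∉ K) :
    ∀ {m : List (Fin S.p)}, FanChain S c m →
      (∀ y ∈ m.tail, ¬ (S.f y ∈ K ∧ α ∈ missingColors S.G' S.k c (S.f y))) →
      FanChain S (swapCol S.G' c α β K) m := by
  intro m h
  induction h with
  | base => intro _; exact FanChain.base
  | @cons i j l hij hm ht ih =>
    intro hno
    refine FanChain.cons hij ?_ (ih (fun y hy => hno y (List.mem_cons_of_mem _ hy)))
    have hiz : i ≠ S.z := by
      intro hcon
      rw [hcon] at hij
      simp [Setting.z] at hij
    have hedge : s(S.r, S.f i) ∈ S.G'.edgeSet := S.edge_mem' hiz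
    have hce : swapCol S.G' c α β K s(S.r, S.f i) = c s(S.r, S.f i) :=
      swapCol_not_mem hK hrK _ (by simp)
    rw [hce]
    have hnoj := hno j (List.mem_cons_self)
    by_cases hjK : S.f j ∈ K
    · have hγα : c s(S.r, S.f i) ≠ α := by
        intro hcon
        exact hnoj ⟨hjK, hcon ▸ hm⟩
      have hγβ : c s(S.r, S.f i) ≠ β := not_present hβr hedge (by simp)
      rw [swapCol_missing_mem hα hβr.1 hαβ hK hjK, swColor_eq_self hγα hγβ]
      exact hm
    · rw [swapCol_missing_not_mem hK hjK]
      exact hm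

/-- the case of a color missing at the head of a chain and at a fan vertex,
when `r` is not in the Kempe chain of that vertex -/
lemma swap_case {c : Sym2 V → ℕ} (hc : IsProperEdgeColoring S.G' S.k c)
    {i : Fin S.p} {l : List (Fin S.p)} (h : FanChain S c (i :: l)) {α β : ℕ}
    (hβr : β ∈ missingColors S.G' S.k c S.r)
    (hαi : α ∈ missingColors S.G' S.k c (S.f i)) (hαβ : α ≠ β)
    (hnr : ¬ (chainGraph S.G' c α β).Reachable S.r (S.f i)) :
    EdgeColorable S.G S.k := by
  set CG := chainGraph S.G' c α β with hCG
  set K : Set V := {v | CG.Reachable (S.f i) v} with hKdef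
  have hK : ∀ ⦃a b⦄, CG.Adj a b → a ∈ K → b ∈ K := fun a b hab ha => ha.trans hab.reachable
  have hrK : S.r ∉ K := fun h => hnr (Reachable.symm h)
  obtain ⟨x, l', hch, hQx, hnoQ⟩ := S.fanchain_find
    (fun y => S.f y ∈ K ∧ α ∈ missingColors S.G' S.k c (S.f y)) h
    ⟨i, List.mem_cons_self, ⟨Reachable.refl _, hαi⟩⟩
  have hch' : FanChain S (swapCol S.G' c α β K) (x :: l') :=
    S.fanchain_swap hc hβr hαi.1 hαβ hK hrK hch hnoQ
  have hc' : IsProperEdgeColoring S.G' S.k (swapCol S.G' c α β K) :=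
    swapCol_proper hc hαi.1 hβr.1 hK
  have hβx : β ∈ missingColors S.G' S.k (swapCol S.G' c α β K) (S.f x) := by
    rw [swapCol_missing_mem hαi.1 hβr.1 hαβ hK hQx.1, swColor_beta hαβ]
    exact hQx.2
  have hβr' : β ∈ missingColors S.G' S.k (swapCol S.G' c α β K) S.r := by
    rw [swapCol_missing_not_mem hK hrK]
    exact hβr
  exact S.shift l' (swapCol S.G' c α β K) hc' x hch' β hβr' hβx

/-- there is a color missing at `r` -/
lemma exists_missing_r {c : Sym2 V → ℕ} (hc : IsProperEdgeColoring S.G' S.k c) :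
    ∃ β, β ∈ missingColors S.G' S.k c S.r := by
  classical
  set P : Finset ℕ :=
    (Finset.univ.filter (fun w => S.G'.Adj S.r w)).image (fun w => c s(S.r, w)) with hP
  have hzadj : S.G.Adj S.r (S.f S.z) := S.hadj S.z
  have hsub : Finset.univ.filter (fun w => S.G'.Adj S.r w) ⊆
      (Finset.univ.filter (fun w => S.G.Adj S.r w)).erase (S.f S.z) := by
    intro w hw
    rw [Finset.mem_filter] at hw
    have hw' := hw.2
    rw [Setting.G', deleteEdges_adj] at hw'
    refine Finset.mem_erase.2 ⟨?_, Finset.mem_filter.2 ⟨Finset.mem_univ _, hw'.1⟩⟩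
    rintro rfl
    exact hw'.2 (by simp)
  have hzmem : S.f S.z ∈ Finset.univ.filter (fun w => S.G.Adj S.r w) :=
    Finset.mem_filter.2 ⟨Finset.mem_univ _, hzadj⟩
  have hdegeq : (Finset.univ.filter (fun w => S.G.Adj S.r w)).card =
      ({w | S.G.Adj S.r w} : Set V).ncard := by
    rw [Set.ncard_eq_toFinset_card', Set.toFinset_setOf]
  have hcardlt : (Finset.univ.filter (fun w => S.G'.Adj S.r w)).card < S.k := by
    calc (Finset.univ.filter (fun w => S.G'.Adj S.r w)).card
        ≤ ((Finset.univ.filter (fun w => S.G.Adj S.r w)).erase (S.f S.z)).card :=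
          Finset.card_le_card hsub
      _ < (Finset.univ.filter (fun w => S.G.Adj S.r w)).card :=
          Finset.card_erase_lt_of_mem hzmem
      _ ≤ S.k := by rw [hdegeq]; exact S.hk
  have hPlt : P.card < (Finset.Icc 1 S.k).card := by
    rw [Nat.card_Icc]
    calc P.card ≤ _ := Finset.card_image_le
      _ < S.k := hcardlt
      _ ≤ S.k + 1 - 1 := by omega
  obtain ⟨β, hβIcc, hβP⟩ : ∃ β ∈ Finset.Icc 1 S.k, β ∉ P := by
    by_contra hcon
    push_neg at hcon
    exact absurd (Finset.card_le_card hcon) (not_le.2 hPlt)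
  refine ⟨β, hβIcc, ?_⟩
  rintro ⟨e, he, hre, hce⟩
  obtain ⟨w, rfl⟩ := Sym2.mem_iff_exists.1 hre
  have hadj : S.G'.Adj S.r w := S.G'.mem_edgeSet.1 he
  exact hβP (Finset.mem_image.2 ⟨w, Finset.mem_filter.2 ⟨Finset.mem_univ _, hadj⟩, hce⟩)
end Setting
end VizingAux
namespace VizingAux
open SimpleGraph

variable {V : Type*} [Fintype V]

namespace Setting
variable (S : Setting V)

/-- the main two-fan-vertices case -/
lemma two_fan {c : Sym2 V → ℕ} (hc : IsProperEdgeColoring S.G' S.k c)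
    {i j : Fin S.p} {li lj : List (Fin S.p)}
    (hchi : FanChain S c (i :: li)) (hchj : FanChain S c (j :: lj))
    (hfij : S.f i ≠ S.f j) {α : ℕ}
    (hαi : α ∈ missingColors S.G' S.k c (S.f i))
    (hαj : α ∈ missingColors S.G' S.k c (S.f j)) : EdgeColorable S.G S.k := by
  obtain ⟨β, hβr⟩ := S.exists_missing_r hc
  by_cases h1 : α ∈ missingColors S.G' S.k c S.r
  · exact S.shift li c hc i hchi α h1 hαi
  have hαβ : α ≠ β := fun h => h1 (h ▸ hβr)
  by_cases h2 : β ∈ missingColors S.G' S.k c (S.f i)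
  · exact S.shift li c hc i hchi β hβr h2
  by_cases h3 : β ∈ missingColors S.G' S.k c (S.f j)
  · exact S.shift lj c hc j hchj β hβr h3
  by_cases hri : (chainGraph S.G' c α β).Reachable S.r (S.f i)
  · by_cases hrj : (chainGraph S.G' c α β).Reachable S.r (S.f j)
    · exact (three_endpoints (chainGraph S.G' c α β) (Ne.symm (S.hr i)) (Ne.symm (S.hr j))
        hfij hri hrj (chain_nbr_le_two hc)
        (chain_nbr_le_one hc (Or.inr rfl) hβr)
        (chain_nbr_le_one hc (Or.inl rfl) hαi)
        (chain_nbr_le_one hc (Or.inl rfl) hαj)).elim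
    · exact S.swap_case hc hchj hβr hαj hαβ hrj
  · exact S.swap_case hc hchi hβr hαi hαβ hri

end Setting
end VizingAux

open VizingAux in
open Classical in
theorem stmt_15 {V : Type*} [Fintype V] (G : SimpleGraph V)
    (hclass2a : EdgeColorable G (G.maxDegree + 1))
    (hclass2b : ¬ EdgeColorable G G.maxDegree)
    (r : V) (p : ℕ) (hp : 0 < p) (f : Fin p → V)
    (hinj : Function.Injective f) (hr : ∀ i, f i ≠ r)
    (hadj : ∀ i, G.Adj r (f i))
    (c : Sym2 V → ℕ)
    (hc : IsProperEdgeColoring (G.deleteEdges {Sym2.mk r (f ⟨0, hp⟩)}) G.maxDegree c)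
    (hfan : ∀ i : Fin p, 0 < (i : ℕ) → ∃ j : Fin p, (j : ℕ) < (i : ℕ) ∧
      c (Sym2.mk r (f i)) ∈
        missingColors (G.deleteEdges {Sym2.mk r (f ⟨0, hp⟩)}) G.maxDegree c (f j)) :
    ∀ u ∈ insert r (Set.range f), ∀ v ∈ insert r (Set.range f), u ≠ v →
      missingColors (G.deleteEdges {Sym2.mk r (f ⟨0, hp⟩)}) G.maxDegree c u ∩
        missingColors (G.deleteEdges {Sym2.mk r (f ⟨0, hp⟩)}) G.maxDegree c v = ∅ := by
  intro u hu v hv huv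
  by_contra hcon
  obtain ⟨α, hαu, hαv⟩ := Set.nonempty_iff_ne_empty.2 hcon
  have hk : ({w | G.Adj r w} : Set V).ncard ≤ G.maxDegree := by
    have h1 : ({w | G.Adj r w} : Set V).ncard = G.degree r := by
      rw [Set.ncard_eq_toFinset_card', Set.toFinset_setOf]
      rw [← SimpleGraph.neighborFinset_eq_filter]
      rfl
    rw [h1]
    exact G.degree_le_maxDegree r
  set S : Setting V := ⟨G, G.maxDegree, r, p, hp, f, hinj, hr, hadj, hk⟩ with hS
  have hc' : IsProperEdgeColoring S.G' S.k c := hc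
  -- existence of fan chains
  have hex : ∀ (n : ℕ) (i : Fin S.p), (i : ℕ) ≤ n → ∃ l, FanChain S c (i :: l) := by
    intro n
    induction n with
    | zero =>
      intro i hi
      have : i = S.z := Fin.ext (Nat.le_zero.1 hi)
      subst this
      exact ⟨[], FanChain.base⟩
    | succ n ih =>
      intro i hi
      by_cases h0 : (i : ℕ) = 0
      · have : i = S.z := Fin.ext h0
        subst this
        exact ⟨[], FanChain.base⟩
      · obtain ⟨j, hj, hm⟩ := hfan i (Nat.pos_of_ne_zero h0)
        obtain ⟨l, hl⟩ := ih j (by omega)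
        exact ⟨j :: l, FanChain.cons hj hm hl⟩
  have hchain : ∀ (i : Fin S.p), ∃ l, FanChain S c (i :: l) := fun i => hex i i le_rfl
  rw [Set.mem_insert_iff, Set.mem_range] at hu hv
  rcases hu with rfl | ⟨i, rfl⟩
  · rcases hv with rfl | ⟨j, rfl⟩
    · exact huv rfl
    · obtain ⟨l, hl⟩ := hchain j
      exact hclass2b (S.shift l c hc' j hl α hαu hαv)
  · rcases hv with rfl | ⟨j, rfl⟩
    · obtain ⟨l, hl⟩ := hchain i
      exact hclass2b (S.shift l c hc' i hl α hαv hαu)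
    · obtain ⟨li, hli⟩ := hchain i
      obtain ⟨lj, hlj⟩ := hchain j
      exact hclass2b (S.two_fan hc' hli hlj huv hαu hαv)
end

section
/- Let G be a class 2 graph with maximum degree Δ, rs₁ ∈ E(G), φ a proper edge Δ-coloring of G − rs₁, and F = (r, rs₁, s₁, …, rs_p, s_p) a multifan. Then for any color α missing at r and any color β missing at some s_i, the vertices r and s_i lie in the same (α,β)-chain of G − rs₁ (they are (α,β)-linked). -/
open SimpleGraph

namespace MFaux

variable {V : Type*}

/-- has color γ at v -/
def mfHas (H : SimpleGraph V) (c : Sym2 V → ℕ) (v : V) (γ : ℕ) : Prop :=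
  ∃ e ∈ H.edgeSet, v ∈ e ∧ c e = γ

lemma mem_missing {H : SimpleGraph V} {k : ℕ} {c : Sym2 V → ℕ} {v : V} {γ : ℕ} :
    γ ∈ missingColors H k c v ↔ γ ∈ Finset.Icc 1 k ∧ ¬ mfHas H c v γ := Iff.rfl

def swapfn (α β x : ℕ) : ℕ := if x = α then β else if x = β then α else x

lemma swapfn_inj (α β : ℕ) : Function.Injective (swapfn α β) := by
  intro x y h
  unfold swapfn at h
  split_ifs at h <;> omega

noncomputable def mfSwap (H : SimpleGraph V) (c : Sym2 V → ℕ) (α β : ℕ) (S : Set V)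
    (e : Sym2 V) : ℕ := by
  classical
  exact if e ∈ H.edgeSet ∧ (∃ v ∈ e, v ∈ S) ∧ (c e = α ∨ c e = β) then swapfn α β (c e) else c e

/-- S closed under chain adjacency -/
def Closed (H : SimpleGraph V) (c : Sym2 V → ℕ) (α β : ℕ) (S : Set V) : Prop :=
  ∀ u v, (chainGraph H c α β).Adj u v → u ∈ S → v ∈ S

lemma closure {H : SimpleGraph V} {c : Sym2 V → ℕ} {α β : ℕ} {S : Set V}
    (hS : Closed H c α β S) {e : Sym2 V} (he : e ∈ H.edgeSet)
    (hcol : c e = α ∨ c e = β) (hu : ∃ v ∈ e, v ∈ S) : ∀ v ∈ e, v ∈ S := by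
  induction e using Sym2.ind with
  | _ x y =>
    have hxy : x ≠ y := by
      have := H.not_isDiag_of_mem_edgeSet he
      simpa [Sym2.mk_isDiag_iff] using this
    have hadj : (chainGraph H c α β).Adj x y := by
      rw [chainGraph, fromEdgeSet_adj]
      exact ⟨⟨he, hcol⟩, hxy⟩
    obtain ⟨u, hu1, hu2⟩ := hu
    intro v hv
    rcases Sym2.mem_iff.mp hu1 with h | h <;> rcases Sym2.mem_iff.mp hv with h' | h' <;>
      subst h <;> subst h'
    · exact hu2
    · exact hS _ _ hadj hu2
    · exact hS _ _ hadj.symm hu2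
    · exact hu2

lemma mfSwap_eq_of_not_mem {H : SimpleGraph V} {c : Sym2 V → ℕ} {α β : ℕ} {S : Set V}
    (hS : Closed H c α β S) {v : V} (hv : v ∉ S) {e : Sym2 V} (hve : v ∈ e) :
    mfSwap H c α β S e = c e := by
  rw [mfSwap]
  split_ifs with h
  · exact absurd (closure hS h.1 h.2.2 h.2.1 v hve) hv
  · rfl

lemma mfSwap_proper {H : SimpleGraph V} {k : ℕ} {c : Sym2 V → ℕ}
    (hc : IsProperEdgeColoring H k c) {α β : ℕ}
    (hα : α ∈ Finset.Icc 1 k) (hβ : β ∈ Finset.Icc 1 k) {S : Set V}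
    (hS : Closed H c α β S) : IsProperEdgeColoring H k (mfSwap H c α β S) := by
  constructor
  · intro e he
    rw [mfSwap]
    split_ifs with h
    · rcases h.2.2 with h' | h' <;> rw [h'] <;> unfold swapfn <;> split_ifs <;> assumption
    · exact hc.1 e he
  · intro e he f hf hef hshare
    have hcef := hc.2 e he f hf hef hshare
    rw [mfSwap, mfSwap]
    split_ifs with h1 h2 h2
    · exact fun h => hcef (swapfn_inj α β h)
    · -- e swapped, f not
      intro h
      apply h2
      refine ⟨hf, ?_, ?_⟩
      · obtain ⟨v, hv1, hv2⟩ := hshare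
        exact ⟨v, hv2, closure hS h1.1 h1.2.2 h1.2.1 v hv1⟩
      · -- c f = swapfn (c e) ∈ {α, β}
        rcases h1.2.2 with h' | h' <;> rw [← h] <;> rw [h'] <;> unfold swapfn <;>
          split_ifs <;> simp_all
    · intro h
      apply h1
      refine ⟨he, ?_, ?_⟩
      · obtain ⟨v, hv1, hv2⟩ := hshare
        exact ⟨v, hv1, closure hS h2.1 h2.2.2 h2.2.1 v hv2⟩
      · rcases h2.2.2 with h' | h' <;> rw [h] <;> rw [h'] <;> unfold swapfn <;>
          split_ifs <;> simp_all
    · exact hcef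

lemma mfSwap_has_of_mem {H : SimpleGraph V} {c : Sym2 V → ℕ} {α β : ℕ} (hαβ : α ≠ β)
    {S : Set V} (hS : Closed H c α β S) {v : V} (hv : v ∈ S) :
    mfHas H (mfSwap H c α β S) v α ↔ mfHas H c v β := by
  constructor
  · rintro ⟨e, he, hve, hce⟩
    refine ⟨e, he, hve, ?_⟩
    rw [mfSwap] at hce
    split_ifs at hce with h
    · rcases h.2.2 with h' | h' <;> rw [h'] <;> rw [h'] at hce <;> unfold swapfn at hce <;>
        split_ifs at hce <;> omega
    · exact absurd ⟨he, ⟨v, hve, hv⟩, Or.inl hce⟩ h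
  · rintro ⟨e, he, hve, hce⟩
    refine ⟨e, he, hve, ?_⟩
    rw [mfSwap]
    have : e ∈ H.edgeSet ∧ (∃ u ∈ e, u ∈ S) ∧ (c e = α ∨ c e = β) :=
      ⟨he, ⟨v, hve, hv⟩, Or.inr hce⟩
    rw [if_pos this, hce]
    unfold swapfn
    split_ifs <;> omega

lemma mfSwap_has_of_mem' {H : SimpleGraph V} {c : Sym2 V → ℕ} {α β : ℕ} (hαβ : α ≠ β)
    {S : Set V} (hS : Closed H c α β S) {v : V} (hv : v ∈ S) :
    mfHas H (mfSwap H c α β S) v β ↔ mfHas H c v α := by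
  constructor
  · rintro ⟨e, he, hve, hce⟩
    refine ⟨e, he, hve, ?_⟩
    rw [mfSwap] at hce
    split_ifs at hce with h
    · rcases h.2.2 with h' | h' <;> rw [h'] <;> rw [h'] at hce <;> unfold swapfn at hce <;>
        split_ifs at hce <;> omega
    · exact absurd ⟨he, ⟨v, hve, hv⟩, Or.inr hce⟩ h
  · rintro ⟨e, he, hve, hce⟩
    refine ⟨e, he, hve, ?_⟩
    rw [mfSwap]
    have : e ∈ H.edgeSet ∧ (∃ u ∈ e, u ∈ S) ∧ (c e = α ∨ c e = β) :=
      ⟨he, ⟨v, hve, hv⟩, Or.inl hce⟩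
    rw [if_pos this, hce]
    unfold swapfn
    split_ifs <;> omega

lemma mfSwap_has_other {H : SimpleGraph V} {c : Sym2 V → ℕ} {α β : ℕ}
    {S : Set V} {v : V} {γ : ℕ} (hγα : γ ≠ α) (hγβ : γ ≠ β) :
    mfHas H (mfSwap H c α β S) v γ ↔ mfHas H c v γ := by
  constructor
  · rintro ⟨e, he, hve, hce⟩
    refine ⟨e, he, hve, ?_⟩
    rw [mfSwap] at hce
    split_ifs at hce with h
    · rcases h.2.2 with h' | h' <;> rw [h'] at hce <;> unfold swapfn at hce <;>
        split_ifs at hce <;> omega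
    · exact hce
  · rintro ⟨e, he, hve, hce⟩
    refine ⟨e, he, hve, ?_⟩
    rw [mfSwap]
    split_ifs with h
    · rcases h.2.2 with h' | h' <;> omega
    · exact hce

lemma mfShift (G : SimpleGraph V) (r s₁ : V) (hGadj : G.Adj r s₁)
    (k : ℕ) (c : Sym2 V → ℕ)
    (hc : IsProperEdgeColoring (G.deleteEdges {s(r, s₁)}) k c)
    (m : ℕ) (t : ℕ → V) (ht0 : t 0 = s₁)
    (htr : ∀ j ≤ m, t j ≠ r) (htadj : ∀ j ≤ m, G.Adj r (t j))
    (htinj : ∀ j l, j ≤ m → l ≤ m → t j = t l → j = l)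
    (hfan : ∀ j, j < m → c s(r, t (j+1)) ∈ missingColors (G.deleteEdges {s(r, s₁)}) k c (t j))
    (γ : ℕ) (hγr : γ ∈ missingColors (G.deleteEdges {s(r,s₁)}) k c r)
    (hγm : γ ∈ missingColors (G.deleteEdges {s(r,s₁)}) k c (t m)) :
    EdgeColorable G k := by
  classical
  set H := G.deleteEdges {s(r,s₁)} with hHdef
  have hHedge : H.edgeSet = G.edgeSet \ {s(r,s₁)} := edgeSet_deleteEdges _
  -- fan edges
  have hfanG : ∀ j, j ≤ m → s(r, t j) ∈ G.edgeSet := fun j hj => (htadj j hj)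
  have huniq : ∀ j l, j ≤ m → l ≤ m → s(r, t j) = s(r, t l) → j = l := by
    intro j l hj hl h
    exact htinj j l hj hl (Sym2.congr_right.mp h)
  have hfanH : ∀ j, 1 ≤ j → j ≤ m → s(r, t j) ∈ H.edgeSet := by
    intro j h1 hj
    rw [hHedge]
    refine ⟨hfanG j hj, ?_⟩
    simp only [Set.mem_singleton_iff]
    intro h
    rw [← ht0] at h
    have := huniq j 0 hj (Nat.zero_le m) h
    omega
  have hnonfanH : ∀ e ∈ G.edgeSet, (¬ ∃ j, j ≤ m ∧ e = s(r, t j)) → e ∈ H.edgeSet := by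
    intro e he hne
    rw [hHedge]
    refine ⟨he, ?_⟩
    simp only [Set.mem_singleton_iff]
    intro h
    exact hne ⟨0, Nat.zero_le m, by rw [h, ht0]⟩
  -- shifted values
  set val : ℕ → ℕ := fun j => if j = m then γ else c s(r, t (j+1)) with hvaldef
  set c2 : Sym2 V → ℕ :=
    fun e => if h : ∃ j, j ≤ m ∧ e = s(r, t j) then val h.choose else c e with hc2def
  have hc2fan : ∀ j, j ≤ m → c2 s(r, t j) = val j := by
    intro j hj
    have h : ∃ j', j' ≤ m ∧ s(r, t j) = s(r, t j') := ⟨j, hj, rfl⟩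
    have hspec := h.choose_spec
    have : j = h.choose := huniq j h.choose hj hspec.1 hspec.2
    simp only [hc2def, dif_pos h, ← this]
  have hc2nonfan : ∀ e, (¬ ∃ j, j ≤ m ∧ e = s(r, t j)) → c2 e = c e := by
    intro e h
    simp only [hc2def, dif_neg h]
  -- properties of val
  have hvalm : val m = γ := by simp [hvaldef]
  have hvallt : ∀ j, j ≠ m → val j = c s(r, t (j+1)) := fun j h => by simp [hvaldef, h]
  have hval_missing : ∀ j, j ≤ m → ¬ mfHas H c (t j) (val j) := by
    intro j hj
    by_cases h : j = m
    · rw [h, hvalm]; exact hγm.2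
    · rw [hvallt j h]
      exact (hfan j (by omega)).2
  have hval_Icc : ∀ j, j ≤ m → val j ∈ Finset.Icc 1 k := by
    intro j hj
    by_cases h : j = m
    · rw [h, hvalm]; exact hγr.1
    · rw [hvallt j h]
      exact hc.1 _ (hfanH (j+1) (by omega) (by omega))
  have hhasr : ∀ f ∈ H.edgeSet, r ∈ f → mfHas H c r (c f) := fun f hf hrf => ⟨f, hf, hrf, rfl⟩
  -- val j ≠ c f for nonfan f at r
  have hval_r : ∀ j, j ≤ m → ∀ f ∈ H.edgeSet, r ∈ f → (¬ ∃ l, l ≤ m ∧ f = s(r, t l)) →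
      val j ≠ c f := by
    intro j hj f hf hrf hnf
    by_cases h : j = m
    · rw [h, hvalm]
      intro heq
      exact hγr.2 (heq ▸ hhasr f hf hrf)
    · rw [hvallt j h]
      refine hc.2 _ (hfanH (j+1) (by omega) (by omega)) f hf ?_ ⟨r, by simp, hrf⟩
      intro heq
      exact hnf ⟨j+1, by omega, heq.symm⟩
  -- val j ≠ val l for j ≠ l
  have hval_ne : ∀ j l, j ≤ m → l ≤ m → j ≠ l → val j ≠ val l := by
    have key : ∀ j l, j ≤ m → l ≤ m → j ≠ l → j = m → val j ≠ val l := by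
      intro j l hj hl hjl hjm
      have hlm : l ≠ m := by omega
      rw [hjm, hvalm, hvallt l hlm]
      intro heq
      exact hγr.2 (heq ▸ hhasr _ (hfanH (l+1) (by omega) (by omega)) (by simp))
    intro j l hj hl hjl
    by_cases hjm : j = m
    · exact key j l hj hl hjl hjm
    by_cases hlm : l = m
    · exact fun h => key l j hl hj hjl.symm hlm h.symm
    rw [hvallt j hjm, hvallt l hlm]
    refine hc.2 _ (hfanH (j+1) (by omega) (by omega)) _ (hfanH (l+1) (by omega) (by omega))
      ?_ ⟨r, by simp, by simp⟩
    intro heq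
    exact hjl (by have := huniq (j+1) (l+1) (by omega) (by omega) heq; omega)
  -- val j ≠ c f when t j ∈ f, f ∈ H
  have hval_t : ∀ j, j ≤ m → ∀ f ∈ H.edgeSet, t j ∈ f → val j ≠ c f := by
    intro j hj f hf htf heq
    exact hval_missing j hj ⟨f, hf, htf, heq.symm⟩
  refine ⟨c2, ?_, ?_⟩
  · intro e he
    by_cases h : ∃ j, j ≤ m ∧ e = s(r, t j)
    · obtain ⟨j, hj, rfl⟩ := h
      rw [hc2fan j hj]; exact hval_Icc j hj
    · rw [hc2nonfan e h]; exact hc.1 e (hnonfanH e he h)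
  · intro e he f hf hef hshare
    obtain ⟨v, hve, hvf⟩ := hshare
    by_cases h1 : ∃ j, j ≤ m ∧ e = s(r, t j) <;> by_cases h2 : ∃ l, l ≤ m ∧ f = s(r, t l)
    · obtain ⟨j, hj, rfl⟩ := h1
      obtain ⟨l, hl, rfl⟩ := h2
      rw [hc2fan j hj, hc2fan l hl]
      exact hval_ne j l hj hl (fun h => hef (by rw [h]))
    · obtain ⟨j, hj, rfl⟩ := h1
      rw [hc2fan j hj, hc2nonfan f h2]
      have hfH := hnonfanH f hf h2
      rcases Sym2.mem_iff.mp hve with h | h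
      · exact hval_r j hj f hfH (h ▸ hvf) h2
      · exact hval_t j hj f hfH (h ▸ hvf)
    · obtain ⟨l, hl, rfl⟩ := h2
      rw [hc2fan l hl, hc2nonfan e h1]
      have heH := hnonfanH e he h1
      rcases Sym2.mem_iff.mp hvf with h | h
      · exact (hval_r l hl e heH (h ▸ hve) h1).symm
      · exact (hval_t l hl e heH (h ▸ hve)).symm
    · rw [hc2nonfan e h1, hc2nonfan f h2]
      exact hc.2 e (hnonfanH e he h1) f (hnonfanH f hf h2) hef ⟨v, hve, hvf⟩

lemma mfLinked (G : SimpleGraph V) (r s₁ : V) (hGadj : G.Adj r s₁) (k : ℕ)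
    (hncol : ¬ EdgeColorable G k) (c : Sym2 V → ℕ)
    (hc : IsProperEdgeColoring (G.deleteEdges {s(r,s₁)}) k c)
    (α : ℕ) (hα : α ∈ missingColors (G.deleteEdges {s(r,s₁)}) k c r)
    (t : ℕ → V) (ht0 : t 0 = s₁)
    (m : ℕ)
    (htr : ∀ j, j ≤ m → t j ≠ r) (htadj : ∀ j, j ≤ m → G.Adj r (t j))
    (htinj : ∀ j l, j ≤ m → l ≤ m → t j = t l → j = l)
    (hfan : ∀ j, j < m → c s(r, t (j+1)) ∈ missingColors (G.deleteEdges {s(r,s₁)}) k c (t j))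
    (β : ℕ) (hβ : β ∈ missingColors (G.deleteEdges {s(r,s₁)}) k c (t m)) :
    (chainGraph (G.deleteEdges {s(r,s₁)}) c α β).Reachable r (t m) := by
  set H := G.deleteEdges {s(r,s₁)} with hHdef
  have hHedge : H.edgeSet = G.edgeSet \ {s(r,s₁)} := edgeSet_deleteEdges _
  induction m using Nat.strong_induction_on generalizing β with
  | _ m ih =>
  have hfanH : ∀ j, 1 ≤ j → j ≤ m → s(r, t j) ∈ H.edgeSet := by
    intro j h1 hj
    rw [hHedge]
    refine ⟨htadj j hj, ?_⟩
    simp only [Set.mem_singleton_iff]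
    intro h
    rw [← ht0] at h
    have := htinj j 0 hj (Nat.zero_le m) (Sym2.congr_right.mp h)
    omega
  by_contra hne
  have hαβ : α ≠ β := by
    intro h
    exact hncol (mfShift G r s₁ hGadj k c hc m t ht0 htr htadj htinj hfan α hα (h ▸ hβ))
  set S : Set V := {v | (chainGraph H c α β).Reachable (t m) v} with hSdef
  have htmS : t m ∈ S := Reachable.refl _
  have hrS : r ∉ S := fun h => hne (Reachable.symm h)
  have hSclosed : Closed H c α β S := fun u v huv hu => hu.trans huv.reachable
  set c' := mfSwap H c α β S with hc'def
  have hc' : IsProperEdgeColoring H k c' := mfSwap_proper hc ((mem_missing.mp hα).1) hβ.1 hSclosed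
  have hredge : ∀ e, r ∈ e → c' e = c e := fun e hre => mfSwap_eq_of_not_mem hSclosed hrS hre
  have hα' : α ∈ missingColors H k c' r := by
    refine mem_missing.mpr ⟨hα.1, ?_⟩
    rintro ⟨e, he, hre, hce⟩
    exact hα.2 ⟨e, he, hre, by rw [← hredge e hre]; exact hce⟩
  have hαm' : α ∈ missingColors H k c' (t m) := by
    refine mem_missing.mpr ⟨hα.1, ?_⟩
    intro h
    exact hβ.2 ((mfSwap_has_of_mem hαβ hSclosed htmS).mp h)
  by_cases hbrk : ∃ j, j < m ∧ t j ∈ S ∧ c s(r, t (j+1)) = β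
  · obtain ⟨j, hjm, hjS, hjβ⟩ := hbrk
    have hβj : β ∈ missingColors H k c (t j) := hjβ ▸ hfan j hjm
    have hreach : (chainGraph H c α β).Reachable r (t j) := by
      apply ih j hjm
      · intro l hl; exact htr l (by omega)
      · intro l hl; exact htadj l (by omega)
      · intro l l' hl hl' h; exact htinj l l' (by omega) (by omega) h
      · intro l hl; exact hfan l (by omega)
      · exact hβj
    exact hne (hreach.trans hjS.symm)
  · push_neg at hbrk
    have hfan' : ∀ j, j < m → c' s(r, t (j+1)) ∈ missingColors H k c' (t j) := by
      intro j hjm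
      have hedge : s(r, t (j+1)) ∈ H.edgeSet := hfanH (j+1) (by omega) (by omega)
      have hcc : c' s(r, t (j+1)) = c s(r, t (j+1)) := hredge _ (by simp)
      have hγj := hfan j hjm
      have hγjα : c s(r, t (j+1)) ≠ α := by
        intro h
        exact hα.2 ⟨_, hedge, by simp, h⟩
      rw [hcc]
      refine mem_missing.mpr ⟨hγj.1, ?_⟩
      by_cases hjS : t j ∈ S
      · have hγjβ : c s(r, t (j+1)) ≠ β := hbrk j hjm hjS
        intro h
        exact hγj.2 ((mfSwap_has_other hγjα hγjβ).mp h)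
      · rintro ⟨e, he, hte, hce⟩
        have heq := mfSwap_eq_of_not_mem hSclosed hjS hte
        exact hγj.2 ⟨e, he, hte, by rw [← heq]; exact hce⟩
    exact hncol (mfShift G r s₁ hGadj k c' hc' m t ht0 htr htadj htinj hfan' α hα' hαm')

end MFaux

-- Multifan lemma (linkage): with `G` class 2, `φ` a proper edge `Δ`-coloring of
-- `G − rs₁` and `F = (r, rs₁, s₁, …, rs_p, s_p)` a multifan, for every color `α`
-- missing at `r` and every color `β` missing at some `s_i`, the vertices `r` and `s_i`
-- lie in the same `(α,β)`-chain of `G − rs₁` (they are `(α,β)`-linked).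
open Classical in
theorem stmt_16 {V : Type*} [Fintype V] (G : SimpleGraph V)
    (hclass2a : EdgeColorable G (G.maxDegree + 1))
    (hclass2b : ¬ EdgeColorable G G.maxDegree)
    (r : V) (p : ℕ) (hp : 0 < p) (f : Fin p → V)
    (hinj : Function.Injective f) (hr : ∀ i, f i ≠ r)
    (hadj : ∀ i, G.Adj r (f i))
    (c : Sym2 V → ℕ)
    (hc : IsProperEdgeColoring (G.deleteEdges {s(r, f ⟨0, hp⟩)}) G.maxDegree c)
    (hfan : ∀ i : Fin p, 0 < (i : ℕ) → ∃ j : Fin p, (j : ℕ) < (i : ℕ) ∧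
      c (s(r, f i)) ∈
        missingColors (G.deleteEdges {s(r, f ⟨0, hp⟩)}) G.maxDegree c (f j)) :
    ∀ α ∈ missingColors (G.deleteEdges {s(r, f ⟨0, hp⟩)}) G.maxDegree c r,
      ∀ i : Fin p,
        ∀ β ∈ missingColors (G.deleteEdges {s(r, f ⟨0, hp⟩)}) G.maxDegree c (f i),
          (chainGraph (G.deleteEdges {s(r, f ⟨0, hp⟩)}) c α β).Reachable r (f i) := by
  classical
  intro α hα i β hβ
  set H := G.deleteEdges {s(r, f ⟨0, hp⟩)} with hHdef
  have extract : ∀ n : ℕ, ∀ i : Fin p, (i : ℕ) = n → ∃ m, ∃ σ : ℕ → Fin p,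
      σ 0 = ⟨0, hp⟩ ∧ σ m = i ∧ (∀ j, j ≤ m → (σ j : ℕ) ≤ (i : ℕ)) ∧
      (∀ j l, j ≤ m → l ≤ m → σ j = σ l → j = l) ∧
      (∀ j, j < m → c s(r, f (σ (j+1))) ∈ missingColors H G.maxDegree c (f (σ j))) := by
    intro n
    induction n using Nat.strong_induction_on with
    | _ n ihn =>
      intro i hi
      by_cases h0 : (i : ℕ) = 0
      · refine ⟨0, fun _ => i, Fin.ext h0, rfl, ?_, ?_, ?_⟩
        · intro j hj; exact le_refl _
        · intro j l hj hl _; omega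
        · intro j hj; omega
      · obtain ⟨jf, hjf, hmiss⟩ := hfan i (Nat.pos_of_ne_zero h0)
        obtain ⟨m, σ, hσ0, hσm, hσle, hσinj, hσfan⟩ := ihn (jf : ℕ) (by omega) jf rfl
        refine ⟨m+1, fun j => if j = m+1 then i else σ j, ?_, ?_, ?_, ?_, ?_⟩
        · show (if 0 = m + 1 then i else σ 0) = ⟨0, hp⟩
          rw [if_neg (by omega : ¬ (0:ℕ) = m+1)]
          exact hσ0
        · simp
        · intro j hj
          by_cases h : j = m+1
          · simp [h]
          · simp only [if_neg h]
            have := hσle j (by omega)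
            omega
        · intro j l hj hl h
          replace h : (if j = m + 1 then i else σ j) = (if l = m + 1 then i else σ l) := h
          by_cases h1 : j = m+1 <;> by_cases h2 : l = m+1
          · omega
          · rw [if_pos h1, if_neg h2] at h
            have h3 := hσle l (by omega)
            have hv : (i : ℕ) = (σ l : ℕ) := by rw [h]
            omega
          · rw [if_neg h1, if_pos h2] at h
            have h3 := hσle j (by omega)
            have hv : (σ j : ℕ) = (i : ℕ) := by rw [h]
            omega
          · rw [if_neg h1, if_neg h2] at h
            exact hσinj j l (by omega) (by omega) h
        · intro j hj
          show c s(r, f (if j + 1 = m + 1 then i else σ (j+1))) ∈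
            missingColors H G.maxDegree c (f (if j = m + 1 then i else σ j))
          by_cases h : j = m
          · rw [h, if_pos rfl, if_neg (by omega : ¬ m = m + 1), hσm]
            exact hmiss
          · rw [if_neg (by omega : ¬ j + 1 = m + 1), if_neg (by omega : ¬ j = m + 1)]
            exact hσfan j (by omega)
  obtain ⟨m, σ, hσ0, hσm, _, hσinj, hσfan⟩ := extract (i : ℕ) i rfl
  have hlink := MFaux.mfLinked G r (f ⟨0, hp⟩) (hadj ⟨0, hp⟩) G.maxDegree hclass2b c hc
    α hα (fun j => f (σ j)) (show f (σ 0) = f ⟨0, hp⟩ by rw [hσ0]) m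
    (fun j hj => hr (σ j)) (fun j hj => hadj (σ j))
    (fun j l hj hl h => hσinj j l hj hl (hinj h)) hσfan
    β (show β ∈ missingColors H G.maxDegree c (f (σ m)) by rw [hσm]; exact hβ)
  have hlink2 : (chainGraph H c α β).Reachable r (f (σ m)) := hlink
  rw [hσm] at hlink2
  exact hlink2
end
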